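/- arXiv:2211.02271 — 8 statements merged into one kernel-verified Lean document; each statement's English description precedes it below -/
import Mathlib

section
/- Let w ∈ A_s and let w⁺ be any element of P_{A_s}(w − λ∇f(w)). Then ((1 − λL)/(2λ))·‖w − w⁺‖² ≤ f(w) − f(w⁺). In particular, along the projected gradient iteration the objective values are nonincreasing. -/
open Filter Topology

noncomputable section

def spSet (n s : ℕ) : Set (EuclideanSpace ℝ (Fin n)) :=
  {w | (Finset.univ.filter fun i => w i ≠ 0).card ≤ s}

def projSet {n : ℕ} (A : Set (EuclideanSpace ℝ (Fin n))) (z : EuclideanSpace ℝ (Fin n)) :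
    Set (EuclideanSpace ℝ (Fin n)) :=
  {y | y ∈ A ∧ ∀ x ∈ A, ‖z - y‖ ≤ ‖z - x‖}

def coordSub {n : ℕ} (J : Finset (Fin n)) : Set (EuclideanSpace ℝ (Fin n)) :=
  {w | ∀ i ∉ J, w i = 0}

def coordRestrict {n : ℕ} (J : Finset (Fin n)) (v : EuclideanSpace ℝ (Fin n)) :
    EuclideanSpace ℝ (Fin n) :=
  (EuclideanSpace.equiv (Fin n) ℝ).symm (fun i => if i ∈ J then v i else 0)

open RealInnerProductSpace

lemma descent {n : ℕ} (f : EuclideanSpace ℝ (Fin n) → ℝ)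
    (f' : EuclideanSpace ℝ (Fin n) → EuclideanSpace ℝ (Fin n)) (L : ℝ)
    (hgrad : ∀ x, HasGradientAt f (f' x) x)
    (hlip : ∀ x y, ‖f' x - f' y‖ ≤ L * ‖x - y‖)
    (x y : EuclideanSpace ℝ (Fin n)) :
    f y ≤ f x + ⟪f' x, y - x⟫ + L / 2 * ‖y - x‖ ^ 2 := by
  set v := y - x with hv
  set h : ℝ → ℝ := fun t => f (x + t • v) - t * ⟪f' x, v⟫ - L / 2 * t ^ 2 * ‖v‖ ^ 2 with hh
  have hline : ∀ t : ℝ, HasDerivAt (fun t : ℝ => x + t • v) v t := fun t =>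
    by simpa using ((hasDerivAt_id t).smul_const v).const_add x
  have hder : ∀ t : ℝ, HasDerivAt h
      (⟪f' (x + t • v), v⟫ - ⟪f' x, v⟫ - L / 2 * (2 * t) * ‖v‖ ^ 2) t := by
    intro t
    have h1 : HasDerivAt (fun t : ℝ => f (x + t • v)) (⟪f' (x + t • v), v⟫) t := by
      have := (hasGradientAt_iff_hasFDerivAt.mp (hgrad (x + t • v))).comp_hasDerivAt t (hline t)
      exact this
    have h2 : HasDerivAt (fun t : ℝ => t * ⟪f' x, v⟫) (⟪f' x, v⟫) t := by
      simpa using (hasDerivAt_id t).mul_const _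
    have h3 : HasDerivAt (fun t : ℝ => L / 2 * t ^ 2 * ‖v‖ ^ 2) (L / 2 * (2 * t) * ‖v‖ ^ 2) t := by
      have := ((hasDerivAt_pow 2 t).const_mul (L / 2)).mul_const (‖v‖ ^ 2)
      simpa [mul_comm, mul_assoc] using this
    exact (h1.sub h2).sub h3
  have hanti : AntitoneOn h (Set.Icc 0 1) := by
    apply antitoneOn_of_deriv_nonpos (convex_Icc 0 1)
    · exact fun t _ => (hder t).continuousAt.continuousWithinAt
    · exact fun t _ => (hder t).differentiableAt.differentiableWithinAt
    · intro t ht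
      rw [interior_Icc] at ht
      rw [(hder t).deriv]
      have hb : ⟪f' (x + t • v) - f' x, v⟫ ≤ L * t * ‖v‖ ^ 2 := by
        calc ⟪f' (x + t • v) - f' x, v⟫ ≤ ‖f' (x + t • v) - f' x‖ * ‖v‖ :=
              real_inner_le_norm _ _
          _ ≤ (L * ‖(x + t • v) - x‖) * ‖v‖ := by
              apply mul_le_mul_of_nonneg_right (hlip _ _) (norm_nonneg _)
          _ = L * t * ‖v‖ ^ 2 := by
              rw [add_sub_cancel_left, norm_smul]
              simp [abs_of_nonneg ht.1.le]
              ring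
      rw [inner_sub_left] at hb
      nlinarith [hb]
  have h10 : h 1 ≤ h 0 := hanti (by norm_num) (by norm_num) zero_le_one
  simp only [hh, one_smul, zero_smul, add_zero, one_pow, one_mul, zero_pow, mul_zero, zero_mul,
    sub_zero] at h10
  have : x + v = y := by rw [hv]; abel
  rw [this] at h10
  linarith

theorem stmt0' {n s : ℕ} (hs1 : 1 ≤ s) (hsn : s ≤ n)
    (f : EuclideanSpace ℝ (Fin n) → ℝ)
    (f' : EuclideanSpace ℝ (Fin n) → EuclideanSpace ℝ (Fin n))
    (L lam : ℝ) (hL : 0 < L)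
    (hgrad : ∀ x, HasGradientAt f (f' x) x)
    (hlip : ∀ x y, ‖f' x - f' y‖ ≤ L * ‖x - y‖)
    (hlam0 : 0 < lam) (hlamL : lam < 1 / L)
    (w wplus : EuclideanSpace ℝ (Fin n))
    (hw : w ∈ {w : EuclideanSpace ℝ (Fin n) | (Finset.univ.filter fun i => w i ≠ 0).card ≤ s})
    (hwplus : wplus ∈ {w : EuclideanSpace ℝ (Fin n) | (Finset.univ.filter fun i => w i ≠ 0).card ≤ s} ∧
      ∀ x ∈ {w : EuclideanSpace ℝ (Fin n) | (Finset.univ.filter fun i => w i ≠ 0).card ≤ s},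
        ‖(w - lam • f' w) - wplus‖ ≤ ‖(w - lam • f' w) - x‖) :
    (1 - lam * L) / (2 * lam) * ‖w - wplus‖ ^ 2 ≤ f w - f wplus := by
  set g := f' w with hg
  set z := w - lam • g with hz
  have hproj : ‖z - wplus‖ ≤ ‖z - w‖ := hwplus.2 w hw
  have hzw : z - w = -(lam • g) := by rw [hz]; abel
  have hzp : z - wplus = (w - wplus) - lam • g := by rw [hz]; abel
  have hsq : ‖z - wplus‖ ^ 2 ≤ ‖z - w‖ ^ 2 := by
    apply pow_le_pow_left₀ (norm_nonneg _) hproj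
  rw [hzw, hzp, norm_neg] at hsq
  have hexp : ‖(w - wplus) - lam • g‖ ^ 2 =
      ‖w - wplus‖ ^ 2 - 2 * ⟪w - wplus, lam • g⟫ + ‖lam • g‖ ^ 2 := by
    have := @norm_sub_sq_real (EuclideanSpace ℝ (Fin n)) _ _ (w - wplus) (lam • g)
    linarith [this]
  have hinner : ‖w - wplus‖ ^ 2 ≤ 2 * lam * ⟪w - wplus, g⟫ := by
    have h2 : ⟪w - wplus, lam • g⟫ = lam * ⟪w - wplus, g⟫ := real_inner_smul_right _ _ _
    nlinarith [hsq, hexp, h2]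
  have hdes := descent f f' L hgrad hlip w wplus
  have hflip : ⟪g, wplus - w⟫ = - ⟪w - wplus, g⟫ := by
    rw [real_inner_comm, ← inner_neg_left]
    congr 1
    abel
  rw [← hg, hflip] at hdes
  have hnormflip : ‖wplus - w‖ = ‖w - wplus‖ := norm_sub_rev _ _
  rw [hnormflip] at hdes
  have hlamL' : lam * L < 1 := by
    rw [lt_div_iff₀ hL] at hlamL
    linarith
  have key : ‖w - wplus‖ ^ 2 - lam * L * ‖w - wplus‖ ^ 2 ≤ 2 * lam * (f w - f wplus) := by
    nlinarith [hdes, hinner]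
  rw [div_mul_eq_mul_div, div_le_iff₀ (by positivity : (0:ℝ) < 2 * lam)]
  nlinarith [key]

/-- sufficient decrease of one projected gradient step. -/
theorem stmt0 {n s : ℕ} (hs1 : 1 ≤ s) (hsn : s ≤ n)
    (f : EuclideanSpace ℝ (Fin n) → ℝ)
    (f' : EuclideanSpace ℝ (Fin n) → EuclideanSpace ℝ (Fin n))
    (L lam : ℝ) (hL : 0 < L)
    (hgrad : ∀ x, HasGradientAt f (f' x) x)
    (hlip : ∀ x y, ‖f' x - f' y‖ ≤ L * ‖x - y‖)
    (hlam0 : 0 < lam) (hlamL : lam < 1 / L)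
    (w wplus : EuclideanSpace ℝ (Fin n))
    (hw : w ∈ spSet n s)
    (hwplus : wplus ∈ projSet (spSet n s) (w - lam • f' w)) :
    (1 - lam * L) / (2 * lam) * ‖w - wplus‖ ^ 2 ≤ f w - f wplus :=
  stmt0' hs1 hsn f f' L lam hL hgrad hlip hlam0 hlamL w wplus hw hwplus
end
end

section
/- Let {w^k} be a sequence generated by the projected gradient iteration w^{k+1} ∈ P_{A_s}(w^k − λ∇f(w^k)) with w^0 ∈ A_s. Then every accumulation point w* of {w^k} satisfies w* ∈ P_{A_s}(w* − λ∇f(w*)), i.e. w* is a fixed point of the projected gradient map. -/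
open Filter Topology

noncomputable section

section Aux

open InnerProductSpace
open scoped RealInnerProductSpace

lemma pg_isClosed_coordSub {n : ℕ} (J : Finset (Fin n)) : IsClosed (coordSub J) := by
  have : coordSub J = ⋂ (i : Fin n) (_ : i ∉ J),
      (EuclideanSpace.proj i : EuclideanSpace ℝ (Fin n) →L[ℝ] ℝ) ⁻¹' {0} := by
    ext w; simp [coordSub, Set.mem_iInter]
  rw [this]
  exact isClosed_iInter fun i => isClosed_iInter fun _ =>
    IsClosed.preimage (EuclideanSpace.proj i).continuous isClosed_singleton

lemma pg_isClosed_spSet (n s : ℕ) : IsClosed (spSet n s) := by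
  have heq : spSet n s = ⋃ J ∈ {J : Finset (Fin n) | J.card ≤ s}, coordSub J := by
    ext w
    simp only [Set.mem_iUnion, Set.mem_setOf_eq, exists_prop]
    constructor
    · intro hw
      exact ⟨Finset.univ.filter fun i => w i ≠ 0, hw, fun i hi => by
        by_contra h; exact hi (Finset.mem_filter.2 ⟨Finset.mem_univ i, h⟩)⟩
    · rintro ⟨J, hJ, hwJ⟩
      refine le_trans (Finset.card_le_card ?_) hJ
      intro i hi
      rw [Finset.mem_filter] at hi
      by_contra h
      exact hi.2 (hwJ i h)
  rw [heq]
  exact Set.Finite.isClosed_biUnion (Set.toFinite _) fun J _ => pg_isClosed_coordSub J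

lemma pg_descent {E : Type*} [NormedAddCommGroup E] [InnerProductSpace ℝ E] [CompleteSpace E]
    (f : E → ℝ) (f' : E → E) (L : ℝ)
    (hgrad : ∀ x, HasGradientAt f (f' x) x)
    (hlip : ∀ x y, ‖f' x - f' y‖ ≤ L * ‖x - y‖) (x y : E) :
    f y ≤ f x + ⟪f' x, y - x⟫ + L / 2 * ‖y - x‖ ^ 2 := by
  set Δ := y - x with hΔ
  set h : ℝ → ℝ := fun t => f (x + t • Δ) - ⟪f' x, Δ⟫ * t - L * ‖Δ‖ ^ 2 / 2 * t ^ 2 with hh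
  have hd : ∀ t : ℝ, HasDerivAt h
      (⟪f' (x + t • Δ), Δ⟫ - ⟪f' x, Δ⟫ - L * ‖Δ‖ ^ 2 * t) t := by
    intro t
    have hc : HasDerivAt (fun t : ℝ => x + t • Δ) Δ t := by
      simpa using ((hasDerivAt_id t).smul_const Δ).const_add x
    have h1 : HasDerivAt (fun t : ℝ => f (x + t • Δ)) ⟪f' (x + t • Δ), Δ⟫ t := by
      have := ((hgrad (x + t • Δ)).hasFDerivAt.comp_hasDerivAt t hc)
      simpa [toDual_apply_apply, Function.comp_def] using this
    have h2 : HasDerivAt (fun t : ℝ => ⟪f' x, Δ⟫ * t) ⟪f' x, Δ⟫ t := by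
      simpa using (hasDerivAt_id t).const_mul ⟪f' x, Δ⟫
    have h3 : HasDerivAt (fun t : ℝ => L * ‖Δ‖ ^ 2 / 2 * t ^ 2) (L * ‖Δ‖ ^ 2 * t) t := by
      have := (hasDerivAt_pow 2 t).const_mul (L * ‖Δ‖ ^ 2 / 2)
      convert this using 1
      · rfl
      · rfl
      ring
    exact (h1.sub h2).sub h3
  have hanti : AntitoneOn h (Set.Icc 0 1) := by
    apply antitoneOn_of_deriv_nonpos (convex_Icc 0 1)
    · exact Continuous.continuousOn (by
        have : Differentiable ℝ h := fun t => (hd t).differentiableAt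
        exact this.continuous)
    · intro t ht
      exact (hd t).differentiableAt.differentiableWithinAt
    · intro t ht
      rw [interior_Icc] at ht
      rw [(hd t).deriv]
      have h4 : ⟪f' (x + t • Δ) - f' x, Δ⟫ ≤ L * ‖Δ‖ ^ 2 * t := by
        calc ⟪f' (x + t • Δ) - f' x, Δ⟫ ≤ ‖f' (x + t • Δ) - f' x‖ * ‖Δ‖ :=
              real_inner_le_norm _ _
          _ ≤ L * ‖(x + t • Δ) - x‖ * ‖Δ‖ := by
              have := hlip (x + t • Δ) x
              nlinarith [norm_nonneg Δ]
          _ = L * ‖Δ‖ ^ 2 * t := by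
              rw [add_sub_cancel_left, norm_smul, Real.norm_eq_abs, abs_of_pos ht.1]
              ring
      rw [inner_sub_left] at h4
      linarith
  have := hanti (Set.left_mem_Icc.2 zero_le_one) (Set.right_mem_Icc.2 zero_le_one) zero_le_one
  simp only [hh, one_smul, zero_smul, add_zero, mul_one, mul_zero, one_pow, zero_pow,
    sub_zero] at this
  have hxy : x + Δ = y := by rw [hΔ]; abel
  rw [hxy] at this
  linarith

end Aux

/-- every accumulation point of the PG iteration is a fixed point of
the projected gradient map. -/
theorem stmt2 {n s : ℕ} (hs1 : 1 ≤ s) (hsn : s ≤ n)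
    (f : EuclideanSpace ℝ (Fin n) → ℝ)
    (f' : EuclideanSpace ℝ (Fin n) → EuclideanSpace ℝ (Fin n))
    (L lam : ℝ) (hL : 0 < L)
    (hconv : ConvexOn ℝ Set.univ f)
    (hgrad : ∀ x, HasGradientAt f (f' x) x)
    (hlip : ∀ x y, ‖f' x - f' y‖ ≤ L * ‖x - y‖)
    (hbdd : BddBelow (f '' spSet n s))
    (hlam0 : 0 < lam) (hlamL : lam < 1 / L)
    (w : ℕ → EuclideanSpace ℝ (Fin n))
    (hw0 : w 0 ∈ spSet n s)
    (hiter : ∀ k, w (k + 1) ∈ projSet (spSet n s) (w k - lam • f' (w k)))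
    (wstar : EuclideanSpace ℝ (Fin n))
    (haccum : ∃ φ : ℕ → ℕ, StrictMono φ ∧ Tendsto (fun k => w (φ k)) atTop (𝓝 wstar)) :
    wstar ∈ projSet (spSet n s) (wstar - lam • f' wstar) := by
  have hmem : ∀ k, w k ∈ spSet n s := by
    intro k
    cases k with
    | zero => exact hw0
    | succ k => exact (hiter k).1
  -- step inequality
  have hLlam : L * lam < 1 := by
    rw [lt_div_iff₀ hL] at hlamL
    linarith
  set δ : ℝ := 1 / (2 * lam) - L / 2 with hδ
  have hδpos : 0 < δ := by
    rw [hδ]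
    have h2 : L / 2 < 1 / (2 * lam) := by
      rw [div_lt_div_iff₀ (by norm_num) (by positivity)]
      nlinarith
    linarith
  have hdesc : ∀ k, f (w (k + 1)) ≤ f (w k) - δ * ‖w (k + 1) - w k‖ ^ 2 := by
    intro k
    set g := f' (w k) with hg
    set u := w k - w (k + 1) with hu
    have hproj := (hiter k).2 (w k) (hmem k)
    have h1 : ‖u - lam • g‖ ≤ ‖lam • g‖ := by
      have e1 : w k - lam • g - w (k + 1) = u - lam • g := by rw [hu]; abel
      have e2 : w k - lam • g - w k = -(lam • g) := by abel
      rw [e1, e2, norm_neg] at hproj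
      exact hproj
    have h2 : ‖u - lam • g‖ ^ 2 ≤ ‖lam • g‖ ^ 2 := by
      exact pow_le_pow_left₀ (norm_nonneg _) h1 2
    rw [@norm_sub_sq_real] at h2
    have h3 : ‖u‖ ^ 2 - 2 * (lam * inner ℝ u g) ≤ 0 := by
      rw [real_inner_smul_right] at h2
      linarith
    have h4 : (inner ℝ g (w (k + 1) - w k) : ℝ) ≤ -(1 / (2 * lam)) * ‖u‖ ^ 2 := by
      have e3 : w (k + 1) - w k = -u := by rw [hu]; abel
      rw [e3, inner_neg_right, real_inner_comm]
      have : ‖u‖ ^ 2 / (2 * lam) ≤ inner ℝ u g := by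
        rw [div_le_iff₀ (by positivity)]
        nlinarith
      rw [neg_mul]
      rw [neg_le_neg_iff]
      calc 1 / (2 * lam) * ‖u‖ ^ 2 = ‖u‖ ^ 2 / (2 * lam) := by ring
        _ ≤ inner ℝ u g := this
    have h5 := pg_descent f f' L hgrad hlip (w k) (w (k + 1))
    have e4 : ‖w (k + 1) - w k‖ = ‖u‖ := by rw [hu, norm_sub_rev]
    rw [e4]
    rw [e4] at h5
    rw [hδ]
    calc f (w (k + 1)) ≤ f (w k) + inner ℝ g (w (k+1) - w k) + L / 2 * ‖u‖ ^ 2 := h5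
      _ ≤ f (w k) + (-(1 / (2 * lam)) * ‖u‖ ^ 2) + L / 2 * ‖u‖ ^ 2 := by linarith
      _ = f (w k) - (1 / (2 * lam) - L / 2) * ‖u‖ ^ 2 := by ring
  -- bounded below and antitone
  obtain ⟨c, hc⟩ := hbdd
  have hlb : ∀ k, c ≤ f (w k) := fun k => hc ⟨w k, hmem k, rfl⟩
  have hanti : Antitone (fun k => f (w k)) := by
    apply antitone_nat_of_succ_le
    intro k
    have := hdesc k
    nlinarith [sq_nonneg ‖w (k + 1) - w k‖, hδpos]
  have hconvf : Tendsto (fun k => f (w k)) atTop (𝓝 (⨅ k, f (w k))) :=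
    tendsto_atTop_ciInf hanti ⟨c, fun y ⟨k, hk⟩ => hk ▸ hlb k⟩
  have hdiff0 : Tendsto (fun k => f (w k) - f (w (k + 1))) atTop (𝓝 0) := by
    have h1 : Tendsto (fun k => f (w (k + 1))) atTop (𝓝 (⨅ k, f (w k))) :=
      hconvf.comp (tendsto_add_atTop_nat 1)
    simpa using hconvf.sub h1
  have hsq0 : Tendsto (fun k => ‖w (k + 1) - w k‖ ^ 2) atTop (𝓝 0) := by
    apply squeeze_zero (fun k => sq_nonneg _)
      (g := fun k => (1 / δ) * (f (w k) - f (w (k + 1))))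
    · intro k
      have h := hdesc k
      rw [one_div, inv_mul_eq_div, le_div_iff₀ hδpos]
      nlinarith [h]
    · simpa using hdiff0.const_mul (1 / δ)
  have hΔ0 : Tendsto (fun k => w (k + 1) - w k) atTop (𝓝 0) := by
    rw [tendsto_zero_iff_norm_tendsto_zero]
    have : Tendsto (fun k => Real.sqrt (‖w (k + 1) - w k‖ ^ 2)) atTop (𝓝 (Real.sqrt 0)) :=
      (Real.continuous_sqrt.tendsto 0).comp hsq0
    simpa [Real.sqrt_sq (norm_nonneg _)] using this
  obtain ⟨φ, hφ, hwφ⟩ := haccum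
  have hφtop : Tendsto φ atTop atTop := hφ.tendsto_atTop
  have hnext : Tendsto (fun k => w (φ k + 1)) atTop (𝓝 wstar) := by
    have h1 : Tendsto (fun k => w (φ k + 1) - w (φ k)) atTop (𝓝 0) := hΔ0.comp hφtop
    have := hwφ.add h1
    simpa using this
  have hfstar : Tendsto (fun k => f' (w (φ k))) atTop (𝓝 (f' wstar)) := by
    rw [tendsto_iff_norm_sub_tendsto_zero]
    apply squeeze_zero (fun k => norm_nonneg _) (fun k => hlip _ _)
    have h1 : Tendsto (fun k => ‖w (φ k) - wstar‖) atTop (𝓝 0) := by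
      have := tendsto_iff_norm_sub_tendsto_zero.mp hwφ
      exact this
    simpa using h1.const_mul L
  have hz : Tendsto (fun k => w (φ k) - lam • f' (w (φ k))) atTop
      (𝓝 (wstar - lam • f' wstar)) := hwφ.sub (hfstar.const_smul lam)
  have hstar_mem : wstar ∈ spSet n s :=
    (pg_isClosed_spSet n s).mem_of_tendsto hwφ (Filter.Eventually.of_forall fun k => hmem _)
  refine ⟨hstar_mem, fun x hx => ?_⟩
  have key : ∀ k, ‖(w (φ k) - lam • f' (w (φ k))) - w (φ k + 1)‖ ≤
      ‖(w (φ k) - lam • f' (w (φ k))) - x‖ := fun k => (hiter (φ k)).2 x hx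
  have hlhs : Tendsto (fun k => ‖(w (φ k) - lam • f' (w (φ k))) - w (φ k + 1)‖) atTop
      (𝓝 ‖(wstar - lam • f' wstar) - wstar‖) := (hz.sub hnext).norm
  have hrhs : Tendsto (fun k => ‖(w (φ k) - lam • f' (w (φ k))) - x‖) atTop
      (𝓝 ‖(wstar - lam • f' wstar) - x‖) := (hz.sub tendsto_const_nhds).norm
  exact le_of_tendsto_of_tendsto' hlhs hrhs key
end
end

section
/- Suppose w* ∈ A_s satisfies P_{A_s}(w* − λ∇f(w*)) = {w*} (the projection is a singleton equal to w*). Then: (i) for every J ∈ I_{w*}, w* is the projection of w* − λ∇f(w*) onto the subspace A_J, equivalently (∇f(w*))_j = 0 for every j ∈ J with J ∈ I_{w*}; (ii) w* is a global minimizer of f over A_J for every J ∈ I_{w*}; and (iii) w* is a local minimizer of f over A_s. -/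
open Filter Topology

noncomputable section

lemma normsq {n : ℕ} (x : EuclideanSpace ℝ (Fin n)) : ‖x‖ ^ 2 = ∑ i, (x i) ^ 2 := by
  rw [PiLp.norm_sq_eq_of_L2]
  simp [Real.norm_eq_abs, sq_abs]

lemma coord_le_norm {n : ℕ} (x : EuclideanSpace ℝ (Fin n)) (i : Fin n) : |x i| ≤ ‖x‖ := by
  have h : (x i) ^ 2 ≤ ‖x‖ ^ 2 := by
    rw [normsq]
    exact Finset.single_le_sum (f := fun j => (x j) ^ 2) (fun j _ => sq_nonneg _)
      (Finset.mem_univ i)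
  calc |x i| = Real.sqrt ((x i) ^ 2) := (Real.sqrt_sq_eq_abs _).symm
    _ ≤ Real.sqrt (‖x‖ ^ 2) := Real.sqrt_le_sqrt h
    _ = ‖x‖ := Real.sqrt_sq (norm_nonneg _)

lemma first_order {n : ℕ} (f : EuclideanSpace ℝ (Fin n) → ℝ)
    (g x v : EuclideanSpace ℝ (Fin n)) (hconv : ConvexOn ℝ Set.univ f)
    (hg : HasGradientAt f g x) :
    f x + (inner ℝ g (v - x) : ℝ) ≤ f v := by
  set d := v - x with hd
  have hcurve : HasDerivAt (fun t : ℝ => x + t • d) d 0 := by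
    simpa using ((hasDerivAt_id (0 : ℝ)).smul_const d).const_add x
  have hφ : HasDerivAt (fun t : ℝ => f (x + t • d)) (inner ℝ g d : ℝ) 0 := by
    have hg' : HasFDerivAt f ((InnerProductSpace.toDual ℝ (EuclideanSpace ℝ (Fin n))) g)
        (x + (0:ℝ) • d) := by simpa using hg.hasFDerivAt
    have h1 := hg'.comp_hasDerivAt 0 hcurve
    exact h1
  have hslope : ∀ᶠ t in 𝓝[>] (0 : ℝ),
      slope (fun t : ℝ => f (x + t • d)) 0 t ≤ f v - f x := by
    filter_upwards [Ioc_mem_nhdsGT_of_mem (Set.left_mem_Ico.mpr one_pos)] with t ht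
    have ht0 : (0 : ℝ) < t := ht.1
    have ht1 : t ≤ 1 := ht.2
    have hcv := hconv.2 (Set.mem_univ x) (Set.mem_univ v)
      (by linarith : (0:ℝ) ≤ 1 - t) (le_of_lt ht0) (by ring)
    have heq : (1 - t) • x + t • v = x + t • d := by
      rw [hd]; module
    rw [heq] at hcv
    rw [slope_def_field]
    simp only [zero_smul, add_zero, sub_zero]
    rw [div_le_iff₀ ht0]
    simp only [smul_eq_mul] at hcv
    nlinarith
  have htend : Tendsto (slope (fun t : ℝ => f (x + t • d)) 0) (𝓝[>] (0:ℝ))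
      (𝓝 (inner ℝ g d : ℝ)) :=
    (hasDerivAt_iff_tendsto_slope.mp hφ).mono_left
      (nhdsWithin_mono _ fun t ht => ne_of_gt ht)
  have := le_of_tendsto htend hslope
  linarith

/-- if the projection of the gradient step at $w^*$ is the singleton
$\{w^*\}$, then $w^*$ is the projection onto each active subspace (equivalently the
gradient vanishes on each active index set), is a global minimizer of $f$ on each
active subspace, and is a local minimizer of $f$ over $A_s$. -/
theorem stmt4 {n s : ℕ} (hs1 : 1 ≤ s) (hsn : s ≤ n)
    (f : EuclideanSpace ℝ (Fin n) → ℝ)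
    (f' : EuclideanSpace ℝ (Fin n) → EuclideanSpace ℝ (Fin n))
    (L lam : ℝ) (hL : 0 < L)
    (hconv : ConvexOn ℝ Set.univ f)
    (hgrad : ∀ x, HasGradientAt f (f' x) x)
    (hlip : ∀ x y, ‖f' x - f' y‖ ≤ L * ‖x - y‖)
    (hlam0 : 0 < lam) (hlamL : lam < 1 / L)
    (wstar : EuclideanSpace ℝ (Fin n)) (hws : wstar ∈ spSet n s)
    (hsingleton : projSet (spSet n s) (wstar - lam • f' wstar) = {wstar}) :
    (∀ J : Finset (Fin n), J.card = s → wstar ∈ coordSub J →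
      wstar ∈ projSet (coordSub J) (wstar - lam • f' wstar) ∧ ∀ j ∈ J, f' wstar j = 0) ∧
    (∀ J : Finset (Fin n), J.card = s → wstar ∈ coordSub J →
      ∀ v ∈ coordSub J, f wstar ≤ f v) ∧
    (∃ δ > 0, ∀ v ∈ spSet n s, ‖v - wstar‖ < δ → f wstar ≤ f v) := by
  classical
  set z := wstar - lam • f' wstar with hz
  have hwproj : wstar ∈ projSet (spSet n s) z := by rw [hsingleton]; rfl
  have hzi : ∀ i, z i = wstar i - lam * f' wstar i := fun i => rfl
  -- gradient vanishes on active sets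
  have key : ∀ J : Finset (Fin n), J.card = s → wstar ∈ coordSub J →
      ∀ j ∈ J, f' wstar j = 0 := by
    intro J hJ hwJ
    set p := coordRestrict J z with hp
    have hpi : ∀ i, p i = if i ∈ J then z i else 0 := fun i => rfl
    have hpA : p ∈ spSet n s := by
      refine le_trans (Finset.card_le_card ?_) (le_of_eq hJ)
      intro i hi
      by_contra hiJ
      exact (Finset.mem_filter.mp hi).2 (by simp [hpi i, hiJ])
    have hle := hwproj.2 p hpA
    have hle2 : ∑ i, (z i - wstar i) ^ 2 ≤ ∑ i, (z i - p i) ^ 2 := by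
      have h2 := pow_le_pow_left₀ (norm_nonneg (z - wstar)) hle 2
      rw [normsq, normsq] at h2
      simpa using h2
    have e1 : ∑ i, (z i - wstar i) ^ 2
        = ∑ i ∈ J, (z i - wstar i) ^ 2 + ∑ i ∈ Jᶜ, (z i) ^ 2 := by
      rw [← Finset.sum_add_sum_compl J]
      congr 1
      refine Finset.sum_congr rfl fun i hi => ?_
      rw [hwJ i (by simpa using hi), sub_zero]
    have e2 : ∑ i, (z i - p i) ^ 2 = ∑ i ∈ Jᶜ, (z i) ^ 2 := by
      rw [← Finset.sum_add_sum_compl J]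
      have h0 : ∑ i ∈ J, (z i - p i) ^ 2 = 0 :=
        Finset.sum_eq_zero fun i hi => by simp [hpi i, hi]
      rw [h0, zero_add]
      refine Finset.sum_congr rfl fun i hi => ?_
      rw [hpi i, if_neg (by simpa using hi), sub_zero]
    have hsum0 : ∑ i ∈ J, (z i - wstar i) ^ 2 ≤ 0 := by
      rw [e1, e2] at hle2; linarith
    intro j hj
    have hterm : (z j - wstar j) ^ 2 = 0 := by
      have hnn : ∀ i ∈ J, (0:ℝ) ≤ (z i - wstar i) ^ 2 := fun i _ => sq_nonneg _
      exact (Finset.sum_eq_zero_iff_of_nonneg hnn).mp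
        (le_antisymm hsum0 (Finset.sum_nonneg hnn)) j hj
    have hzj : z j = wstar j := by
      have := pow_eq_zero_iff (n := 2) (by norm_num) |>.mp hterm
      linarith [sub_eq_zero.mp this]
    rw [hzi j] at hzj
    have hml : lam * f' wstar j = 0 := by linarith
    rcases mul_eq_zero.mp hml with h | h
    · exact absurd h (ne_of_gt hlam0)
    · exact h
  -- projection onto coordinate subspaces
  have proj2 : ∀ J : Finset (Fin n), J.card = s → wstar ∈ coordSub J →
      wstar ∈ projSet (coordSub J) z := by
    intro J hJ hwJ
    refine ⟨hwJ, fun x hx => ?_⟩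
    have hterm : ∀ i, (z i - wstar i) ^ 2 ≤ (z i - x i) ^ 2 := by
      intro i
      by_cases hi : i ∈ J
      · have : z i = wstar i := by rw [hzi i, key J hJ hwJ i hi]; ring
        simp [this, sq_nonneg]
      · rw [hwJ i hi, hx i hi]
    have hsum : ∑ i, (z i - wstar i) ^ 2 ≤ ∑ i, (z i - x i) ^ 2 :=
      Finset.sum_le_sum fun i _ => hterm i
    have h2 : ‖z - wstar‖ ^ 2 ≤ ‖z - x‖ ^ 2 := by
      rw [normsq, normsq]; simpa using hsum
    calc ‖z - wstar‖ = Real.sqrt (‖z - wstar‖ ^ 2) := (Real.sqrt_sq (norm_nonneg _)).symm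
      _ ≤ Real.sqrt (‖z - x‖ ^ 2) := Real.sqrt_le_sqrt h2
      _ = ‖z - x‖ := Real.sqrt_sq (norm_nonneg _)
  -- global minimality on coordinate subspaces
  have globalmin : ∀ J : Finset (Fin n), J.card = s → wstar ∈ coordSub J →
      ∀ v ∈ coordSub J, f wstar ≤ f v := by
    intro J hJ hwJ v hv
    have hfo := first_order f (f' wstar) wstar v hconv (hgrad wstar)
    have hinner : (inner ℝ (f' wstar) (v - wstar) : ℝ) = 0 := by
      rw [PiLp.inner_apply]
      refine Finset.sum_eq_zero fun i _ => ?_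
      by_cases hi : i ∈ J
      · simp [key J hJ hwJ i hi]
      · have : v i - wstar i = 0 := by rw [hwJ i hi, hv i hi, sub_zero]
        simp [RCLike.inner_apply]
        left
        simpa using this
    rw [hinner] at hfo
    linarith
  refine ⟨fun J hJ hwJ => ⟨proj2 J hJ hwJ, key J hJ hwJ⟩, globalmin, ?_⟩
  -- local minimality over the sparsity set
  set T := Finset.univ.filter (fun i => wstar i ≠ 0) with hT
  set S : Finset ℝ := insert (1:ℝ) (T.image fun i => |wstar i|) with hS
  have hSne : S.Nonempty := ⟨1, by simp [hS]⟩
  set δ := S.min' hSne with hδ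
  have hδpos : 0 < δ := by
    have hall : ∀ a ∈ S, (0:ℝ) < a := by
      intro a ha
      rw [hS] at ha
      rcases Finset.mem_insert.mp ha with h | h
      · rw [h]; norm_num
      · obtain ⟨i, hi, hiv⟩ := Finset.mem_image.mp h
        rw [← hiv]
        exact abs_pos.mpr (Finset.mem_filter.mp hi).2
    exact hall _ (S.min'_mem hSne)
  refine ⟨δ, hδpos, ?_⟩
  intro v hv hnorm
  have hsupp : T ⊆ Finset.univ.filter (fun i => v i ≠ 0) := by
    intro i hi
    have hwi : wstar i ≠ 0 := (Finset.mem_filter.mp hi).2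
    refine Finset.mem_filter.mpr ⟨Finset.mem_univ i, ?_⟩
    intro hvi
    have h1 : |wstar i| ≤ ‖v - wstar‖ := by
      have := coord_le_norm (v - wstar) i
      have hco : (v - wstar) i = v i - wstar i := rfl
      rw [hco, hvi, zero_sub, abs_neg] at this
      exact this
    have h2 : δ ≤ |wstar i| :=
      Finset.min'_le S _ (Finset.mem_insert_of_mem (Finset.mem_image_of_mem _ hi))
    linarith
  have hcard : (Finset.univ.filter fun i => v i ≠ 0).card ≤ s := hv
  obtain ⟨J, hJ1, _, hJcard⟩ := Finset.exists_subsuperset_card_eq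
    (Finset.subset_univ (Finset.univ.filter fun i => v i ≠ 0)) hcard
    (by simpa using hsn)
  have hvJ : v ∈ coordSub J := by
    intro i hi
    by_contra hvi
    exact hi (hJ1 (Finset.mem_filter.mpr ⟨Finset.mem_univ i, hvi⟩))
  have hwJ2 : wstar ∈ coordSub J := by
    intro i hi
    by_contra hwi
    exact hi (hJ1 (hsupp (Finset.mem_filter.mpr ⟨Finset.mem_univ i, hwi⟩)))
  exact globalmin J hJcard hwJ2 v hvJ
end
end

section
/- Let {w^k} be a sequence generated by the projected gradient iteration w^{k+1} ∈ P_{A_s}(w^k − λ∇f(w^k)) with w^0 ∈ A_s, and let w* be an accumulation point of {w^k} such that P_{A_s}(w* − λ∇f(w*)) is a singleton. Then the full sequence {w^k} converges to w*. -/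
open Filter Topology

noncomputable section

local notation "⟪" x ", " y "⟫" => @inner ℝ _ _ x y

variable {n : ℕ}

abbrev E (n : ℕ) := EuclideanSpace ℝ (Fin n)

/-- derivative of f along a line -/
lemma pgLineDeriv {f : E n → ℝ} {g : E n → E n} (hgrad : ∀ x, HasGradientAt f (g x) x)
    (x d : E n) (t : ℝ) :
    HasDerivAt (fun t : ℝ => f (x + t • d)) ⟪g (x + t • d), d⟫ t := by
  have hline : HasDerivAt (fun t : ℝ => x + t • d) d t := by
    simpa using ((hasDerivAt_id t).smul_const d).const_add x
  have hf : HasFDerivAt f (InnerProductSpace.toDual ℝ (E n) (g (x + t • d))) (x + t • d) :=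
    (hgrad _)
  exact hf.comp_hasDerivAt t hline

/-- gradient inequality for convex functions -/
lemma grad_ineq {f : E n → ℝ} {g : E n → E n} (hconv : ConvexOn ℝ Set.univ f)
    (hgrad : ∀ x, HasGradientAt f (g x) x) (x y : E n) :
    f x + ⟪g x, y - x⟫ ≤ f y := by
  set d := y - x with hd
  have hφ : ConvexOn ℝ Set.univ (fun t : ℝ => f (x + t • d)) := by
    have := hconv.comp_affineMap (AffineMap.const ℝ ℝ x + LinearMap.toAffineMap (LinearMap.toSpanSingleton ℝ _ d))
    have he : (fun t : ℝ => f (x + t • d)) = f ∘ (AffineMap.const ℝ ℝ x + LinearMap.toAffineMap (LinearMap.toSpanSingleton ℝ _ d)) := by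
      funext t; simp [LinearMap.toSpanSingleton_apply]
    rw [he]
    simpa using this
  have hder := pgLineDeriv hgrad x d 0
  simp only [zero_smul, add_zero] at hder
  have := hφ.le_slope_of_hasDerivAt (Set.mem_univ (0:ℝ)) (Set.mem_univ (1:ℝ)) one_pos hder
  rw [slope_def_field] at this
  have h1 : x + (1:ℝ) • d = y := by simp [hd]
  simp only [div_one, sub_zero, zero_smul, add_zero, h1] at this
  linarith

/-- descent lemma -/
lemma descent_lem {f : E n → ℝ} {g : E n → E n} {L : ℝ} (hL : 0 < L)
    (hgrad : ∀ x, HasGradientAt f (g x) x)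
    (hlip : ∀ x y, ‖g x - g y‖ ≤ L * ‖x - y‖) (x y : E n) :
    f y ≤ f x + ⟪g x, y - x⟫ + L / 2 * ‖y - x‖ ^ 2 := by
  set d := y - x with hd
  set χ : ℝ → ℝ := fun t => f (x + t • d) - t * ⟪g x, d⟫ - L / 2 * t ^ 2 * ‖d‖ ^ 2 with hχ
  have hχd : ∀ t : ℝ, HasDerivAt χ (⟪g (x + t • d), d⟫ - ⟪g x, d⟫ - L * t * ‖d‖ ^ 2) t := by
    intro t
    have h1 := pgLineDeriv hgrad x d t
    have h2 : HasDerivAt (fun t : ℝ => t * ⟪g x, d⟫) ⟪g x, d⟫ t := by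
      simpa using (hasDerivAt_id t).mul_const ⟪g x, d⟫
    have h3 : HasDerivAt (fun t : ℝ => L / 2 * t ^ 2 * ‖d‖ ^ 2) (L * t * ‖d‖ ^ 2) t := by
      have := ((hasDerivAt_pow 2 t).const_mul (L / 2)).mul_const (‖d‖ ^ 2)
      exact this.congr_deriv (by ring)
    exact (h1.sub h2).sub h3
  have hanti : AntitoneOn χ (Set.Icc (0:ℝ) 1) := by
    apply antitoneOn_of_deriv_nonpos (convex_Icc 0 1)
    · exact fun t _ => ((hχd t).continuousAt).continuousWithinAt
    · intro t ht
      exact ((hχd t).differentiableAt).differentiableWithinAt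
    · intro t ht
      rw [interior_Icc] at ht
      rw [(hχd t).deriv]
      have hb : ⟪g (x + t • d) - g x, d⟫ ≤ L * t * ‖d‖ ^ 2 := by
        calc ⟪g (x + t • d) - g x, d⟫ ≤ ‖g (x + t • d) - g x‖ * ‖d‖ :=
              real_inner_le_norm _ _
          _ ≤ (L * ‖(x + t • d) - x‖) * ‖d‖ := by
              gcongr; exact hlip _ _
          _ = L * (|t| * ‖d‖) * ‖d‖ := by
              simp [norm_smul, abs_of_nonneg, mul_assoc]
          _ = L * t * ‖d‖ ^ 2 := by
              rw [abs_of_pos ht.1]; ring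
      have : ⟪g (x + t • d), d⟫ - ⟪g x, d⟫ = ⟪g (x + t • d) - g x, d⟫ := by
        rw [inner_sub_left]
      linarith
  have h01 := hanti (Set.left_mem_Icc.2 zero_le_one) (Set.right_mem_Icc.2 zero_le_one) zero_le_one
  simp only [hχ] at h01
  have h1 : x + (1:ℝ) • d = y := by simp [hd]
  have h0 : x + (0:ℝ) • d = x := by simp
  rw [h1, h0] at h01
  linarith


lemma inner_concaveOn {n : ℕ} (c : E n) : ConcaveOn ℝ Set.univ (fun u : E n => ⟪c, u⟫) := by
  refine ⟨convex_univ, ?_⟩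
  intro u _ v _ p q _ _ _
  apply le_of_eq
  show p • ⟪c, u⟫ + q • ⟪c, v⟫ = ⟪c, p • u + q • v⟫
  rw [inner_add_right, real_inner_smul_right, real_inner_smul_right, smul_eq_mul, smul_eq_mul]

/-- cocoercivity -/
lemma cocoercive {f : E n → ℝ} {g : E n → E n} {L : ℝ} (hL : 0 < L)
    (hconv : ConvexOn ℝ Set.univ f)
    (hgrad : ∀ x, HasGradientAt f (g x) x)
    (hlip : ∀ x y, ‖g x - g y‖ ≤ L * ‖x - y‖) (x y : E n) :
    ‖g x - g y‖ ^ 2 ≤ L * ⟪g x - g y, x - y⟫ := by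
  have key : ∀ a b : E n, f a + ⟪g a, b - a⟫ + ‖g b - g a‖ ^ 2 / (2 * L) ≤ f b := by
    intro a b
    set h : E n → ℝ := fun u => f u - ⟪g a, u⟫ with hh
    have hhconv : ConvexOn ℝ Set.univ h := hconv.sub (inner_concaveOn (g a))
    have hGh : ∀ u, HasGradientAt h (g u - g a) u := by
      intro u
      show HasFDerivAt h (InnerProductSpace.toDual ℝ (E n) (g u - g a)) u
      rw [map_sub]
      have h2 : HasFDerivAt (fun u : E n => ⟪g a, u⟫)
          ((InnerProductSpace.toDual ℝ (E n) (g a)) : E n →L[ℝ] ℝ) u := by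
        have := (InnerProductSpace.toDual ℝ (E n) (g a)).hasFDerivAt (x := u)
        convert this using 2
        exact (InnerProductSpace.toDual_apply_apply).symm
      exact (hasGradientAt_iff_hasFDerivAt.mp (hgrad u)).sub h2
    have hliph : ∀ u v : E n, ‖(g u - g a) - (g v - g a)‖ ≤ L * ‖u - v‖ := by
      intro u v; simpa using hlip u v
    -- minimality of h at a
    have hmin : ∀ u : E n, h a ≤ h u := by
      intro u
      have := grad_ineq hhconv hGh a u
      simpa using this
    -- descent step at b
    set u0 : E n := b - (1 / L) • (g b - g a) with hu0
    have hdes := descent_lem hL hGh hliph b u0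
    have e1 : u0 - b = -((1 / L) • (g b - g a)) := by rw [hu0]; abel
    have e2 : ⟪g b - g a, u0 - b⟫ = -((1 / L) * ‖g b - g a‖ ^ 2) := by
      rw [e1, inner_neg_right, real_inner_smul_right, real_inner_self_eq_norm_sq]
    have e3 : ‖u0 - b‖ ^ 2 = (1 / L) ^ 2 * ‖g b - g a‖ ^ 2 := by
      rw [e1, norm_neg, norm_smul, mul_pow, Real.norm_eq_abs, sq_abs]
    rw [e2, e3] at hdes
    have hmu := hmin u0
    have hfin : h a ≤ h b - ‖g b - g a‖ ^ 2 / (2 * L) := by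
      have : h u0 ≤ h b - ‖g b - g a‖ ^ 2 / (2 * L) := by
        have hL' : L ≠ 0 := ne_of_gt hL
        calc h u0 ≤ h b + -((1 / L) * ‖g b - g a‖ ^ 2) + L / 2 * ((1 / L) ^ 2 * ‖g b - g a‖ ^ 2) := hdes
          _ = h b - ‖g b - g a‖ ^ 2 / (2 * L) := by field_simp; ring
      exact le_trans hmu this
    have hexp : h a = f a - ⟪g a, a⟫ := rfl
    have hexp2 : h b = f b - ⟪g a, b⟫ := rfl
    rw [hexp, hexp2] at hfin
    have e4 : ⟪g a, b - a⟫ = ⟪g a, b⟫ - ⟪g a, a⟫ := by rw [inner_sub_right]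
    linarith
  have k1 := key x y
  have k2 := key y x
  have e1 : ⟪g x - g y, x - y⟫ = ⟪g x, x⟫ - ⟪g x, y⟫ - (⟪g y, x⟫ - ⟪g y, y⟫) := by
    rw [inner_sub_left, inner_sub_right, inner_sub_right]
  have e2 : ⟪g x, y - x⟫ = ⟪g x, y⟫ - ⟪g x, x⟫ := by rw [inner_sub_right]
  have e3 : ⟪g y, x - y⟫ = ⟪g y, x⟫ - ⟪g y, y⟫ := by rw [inner_sub_right]
  have e5 : ‖g y - g x‖ = ‖g x - g y‖ := norm_sub_rev _ _
  rw [e2] at k1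
  rw [e3] at k2
  rw [e5] at k1
  rw [e1]
  have hsum : ‖g x - g y‖ ^ 2 / (2 * L) + ‖g x - g y‖ ^ 2 / (2 * L)
      ≤ ⟪g x, x⟫ - ⟪g x, y⟫ - (⟪g y, x⟫ - ⟪g y, y⟫) := by linarith
  calc ‖g x - g y‖ ^ 2
      = L * (‖g x - g y‖ ^ 2 / (2 * L) + ‖g x - g y‖ ^ 2 / (2 * L)) := by
        field_simp
        ring
    _ ≤ L * (⟪g x, x⟫ - ⟪g x, y⟫ - (⟪g y, x⟫ - ⟪g y, y⟫)) :=
        mul_le_mul_of_nonneg_left hsum hL.le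

/-- nonexpansiveness of the gradient step -/
lemma nonexp {f : E n → ℝ} {g : E n → E n} {L lam : ℝ} (hL : 0 < L)
    (hconv : ConvexOn ℝ Set.univ f)
    (hgrad : ∀ x, HasGradientAt f (g x) x)
    (hlip : ∀ x y, ‖g x - g y‖ ≤ L * ‖x - y‖)
    (hlam0 : 0 ≤ lam) (hlam2 : lam * L ≤ 2) (x y : E n) :
    ‖(x - lam • g x) - (y - lam • g y)‖ ≤ ‖x - y‖ := by
  have hre : (x - lam • g x) - (y - lam • g y) = (x - y) - lam • (g x - g y) := by
    rw [smul_sub]; abel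
  rw [hre]
  have hsq : ‖(x - y) - lam • (g x - g y)‖ ^ 2 ≤ ‖x - y‖ ^ 2 := by
    have hexp : ‖(x - y) - lam • (g x - g y)‖ ^ 2
        = ‖x - y‖ ^ 2 - 2 * (lam * ⟪x - y, g x - g y⟫) + lam ^ 2 * ‖g x - g y‖ ^ 2 := by
      rw [norm_sub_sq_real, real_inner_smul_right, norm_smul, mul_pow, Real.norm_eq_abs, sq_abs]
    rw [hexp]
    have hc := cocoercive hL hconv hgrad hlip x y
    have hcomm : ⟪g x - g y, x - y⟫ = ⟪x - y, g x - g y⟫ := real_inner_comm _ _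
    rw [hcomm] at hc
    have hI : 0 ≤ ⟪x - y, g x - g y⟫ := by nlinarith [sq_nonneg ‖g x - g y‖]
    nlinarith [mul_le_mul_of_nonneg_left hc (sq_nonneg lam),
      mul_nonneg (mul_nonneg (sub_nonneg.2 hlam2) hlam0) hI]
  nlinarith [norm_nonneg ((x - y) - lam • (g x - g y)), norm_nonneg (x - y), hsq]







def suppF {n : ℕ} (y : E n) : Finset (Fin n) := Finset.univ.filter fun i => y i ≠ 0

def qsum {n : ℕ} (J : Finset (Fin n)) (z : E n) : ℝ := ∑ i ∈ J, (z i) ^ 2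

lemma coordRestrict_apply {n : ℕ} (J : Finset (Fin n)) (v : E n) (i : Fin n) :
    coordRestrict J v i = if i ∈ J then v i else 0 := rfl

lemma pg_norm_sq {n : ℕ} (v : E n) : ‖v‖ ^ 2 = ∑ i, (v i) ^ 2 := by
  rw [EuclideanSpace.norm_eq, Real.sq_sqrt (by positivity)]
  simp [sq_abs]

lemma norm_le_of_sq_le {n : ℕ} {u v : E n} (h : ‖u‖ ^ 2 ≤ ‖v‖ ^ 2) : ‖u‖ ≤ ‖v‖ := by
  nlinarith [norm_nonneg u, norm_nonneg v]

lemma mem_spSet_iff {n s : ℕ} (x : E n) : x ∈ spSet n s ↔ (suppF x).card ≤ s := Iff.rfl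

lemma cr_mem_spSet {n s : ℕ} {J : Finset (Fin n)} (hJ : J.card ≤ s) (z : E n) :
    coordRestrict J z ∈ spSet n s := by
  rw [mem_spSet_iff]
  refine le_trans (Finset.card_le_card ?_) hJ
  intro i hi
  rw [suppF, Finset.mem_filter] at hi
  by_contra hiJ
  exact hi.2 (by rw [coordRestrict_apply, if_neg hiJ])

lemma dist_cr {n : ℕ} (J : Finset (Fin n)) (z : E n) :
    ‖z - coordRestrict J z‖ ^ 2 = ‖z‖ ^ 2 - qsum J z := by
  rw [pg_norm_sq, pg_norm_sq]
  have pt : ∀ i : Fin n, ((z - coordRestrict J z) i) ^ 2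
      = z i ^ 2 - (if i ∈ J then z i ^ 2 else 0) := by
    intro i
    have : (z - coordRestrict J z) i = z i - coordRestrict J z i := rfl
    rw [this, coordRestrict_apply]
    by_cases h : i ∈ J <;> simp [h]
  rw [Finset.sum_congr rfl (fun i _ => pt i), Finset.sum_sub_distrib]
  congr 1
  rw [Finset.sum_ite_mem, Finset.univ_inter, qsum]

lemma dist_lower {n : ℕ} (z x : E n) :
    ‖z‖ ^ 2 - qsum (suppF x) z ≤ ‖z - x‖ ^ 2 := by
  rw [pg_norm_sq, pg_norm_sq]
  have pt : ∀ i : Fin n, z i ^ 2 - (if i ∈ suppF x then z i ^ 2 else 0)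
      ≤ ((z - x) i) ^ 2 := by
    intro i
    have hzx : (z - x) i = z i - x i := rfl
    by_cases h : i ∈ suppF x
    · simp only [if_pos h, sub_self, sub_zero]
      positivity
    · have hx0 : x i = 0 := by
        simp only [suppF, Finset.mem_filter, Finset.mem_univ, true_and] at h
        push_neg at h
        exact h
      rw [if_neg h, hzx, hx0]
      simp
  calc ∑ i, z i ^ 2 - qsum (suppF x) z
      = ∑ i : Fin n, (z i ^ 2 - if i ∈ suppF x then z i ^ 2 else 0) := by
        rw [Finset.sum_sub_distrib]
        congr 1
        rw [Finset.sum_ite_mem, Finset.univ_inter, qsum]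
    _ ≤ ∑ i, ((z - x) i) ^ 2 := Finset.sum_le_sum (fun i _ => pt i)

lemma proj_eq_cr {n s : ℕ} {z y : E n} (hy : y ∈ projSet (spSet n s) z) :
    y = coordRestrict (suppF y) z := by
  have hcoord : ∀ i, y i ≠ 0 → y i = z i := by
    intro i hyi
    by_contra hne
    set y' : E n := (EuclideanSpace.equiv (Fin n) ℝ).symm
      (fun j => if j = i then z i else y j) with hy'
    have hy'app : ∀ j, y' j = if j = i then z i else y j := fun j => rfl
    have hy'mem : y' ∈ spSet n s := by
      rw [mem_spSet_iff]
      refine le_trans (Finset.card_le_card ?_) (hy.1)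
      intro j hj
      simp only [suppF, Finset.mem_filter, Finset.mem_univ, true_and] at hj ⊢
      rw [hy'app] at hj
      by_cases hji : j = i
      · subst hji; exact hyi
      · rwa [if_neg hji] at hj
    have hlt : ‖z - y'‖ ^ 2 < ‖z - y‖ ^ 2 := by
      rw [pg_norm_sq, pg_norm_sq]
      apply Finset.sum_lt_sum
      · intro j _
        have e1 : (z - y') j = z j - y' j := rfl
        have e2 : (z - y) j = z j - y j := rfl
        rw [e1, e2, hy'app]
        by_cases hji : j = i
        · subst hji; rw [if_pos rfl]; simpa using sq_nonneg (z j - y j)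
        · rw [if_neg hji]
      · refine ⟨i, Finset.mem_univ i, ?_⟩
        have e1 : (z - y') i = z i - y' i := rfl
        have e2 : (z - y) i = z i - y i := rfl
        rw [e1, e2, hy'app, if_pos rfl]
        have hne2 : z i - y i ≠ 0 := fun hc => hne (by linarith [sub_eq_zero.mp hc])
        simpa using pow_two_pos_of_ne_zero hne2
    have := hy.2 y' hy'mem
    nlinarith [norm_nonneg (z - y'), norm_nonneg (z - y)]
  ext i
  rw [coordRestrict_apply]
  by_cases h : i ∈ suppF y
  · rw [if_pos h]
    simp only [suppF, Finset.mem_filter, Finset.mem_univ, true_and] at h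
    exact hcoord i h
  · rw [if_neg h]
    simp only [suppF, Finset.mem_filter, Finset.mem_univ, true_and] at h
    push_neg at h
    exact h

lemma proj_qmax {n s : ℕ} {z y : E n} (hy : y ∈ projSet (spSet n s) z)
    {J : Finset (Fin n)} (hJ : J.card ≤ s) : qsum J z ≤ qsum (suppF y) z := by
  have h1 := hy.2 (coordRestrict J z) (cr_mem_spSet hJ z)
  have h2 : ‖z - y‖ ^ 2 ≤ ‖z - coordRestrict J z‖ ^ 2 := by
    nlinarith [norm_nonneg (z - y)]
  rw [dist_cr] at h2
  have h3 : y = coordRestrict (suppF y) z := proj_eq_cr hy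
  rw [h3, dist_cr] at h2
  linarith

lemma proj_of_qmax {n s : ℕ} {z : E n} {J : Finset (Fin n)} (hJ : J.card ≤ s)
    (hmax : ∀ J' : Finset (Fin n), J'.card ≤ s → qsum J' z ≤ qsum J z) :
    coordRestrict J z ∈ projSet (spSet n s) z := by
  refine ⟨cr_mem_spSet hJ z, ?_⟩
  intro x hx
  apply norm_le_of_sq_le
  rw [dist_cr]
  have := hmax (suppF x) ((mem_spSet_iff x).mp hx)
  linarith [dist_lower z x]

lemma cr_lipschitz {n : ℕ} (J : Finset (Fin n)) (z zs : E n) :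
    ‖coordRestrict J z - coordRestrict J zs‖ ≤ ‖z - zs‖ := by
  apply norm_le_of_sq_le
  rw [pg_norm_sq, pg_norm_sq]
  apply Finset.sum_le_sum
  intro i _
  have e1 : (coordRestrict J z - coordRestrict J zs) i
      = coordRestrict J z i - coordRestrict J zs i := rfl
  have e2 : (z - zs) i = z i - zs i := rfl
  rw [e1, e2, coordRestrict_apply, coordRestrict_apply]
  by_cases h : i ∈ J
  · rw [if_pos h, if_pos h]
  · rw [if_neg h, if_neg h]
    simpa using sq_nonneg (z i - zs i)

lemma stab {n s : ℕ} (zs p : E n) (hp : projSet (spSet n s) zs = {p}) :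
    ∃ δ > 0, ∀ z y : E n, ‖z - zs‖ < δ → y ∈ projSet (spSet n s) z →
      ‖y - p‖ ≤ ‖z - zs‖ := by
  classical
  set 𝒥 : Finset (Finset (Fin n)) := Finset.univ.filter (fun J => J.card ≤ s) with h𝒥
  have h𝒥ne : 𝒥.Nonempty := ⟨∅, by simp [h𝒥]⟩
  set M : ℝ := 𝒥.sup' h𝒥ne (fun J => qsum J zs) with hM
  set 𝒥' : Finset (Finset (Fin n)) := 𝒥.filter (fun J => qsum J zs < M) with h𝒥'
  set γ : ℝ := if h : 𝒥'.Nonempty then 𝒥'.inf' h (fun J => M - qsum J zs) else 1 with hγdef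
  have hγpos : 0 < γ := by
    rw [hγdef]
    split_ifs with h
    · rw [Finset.lt_inf'_iff]
      intro J hJ
      rw [h𝒥', Finset.mem_filter] at hJ
      linarith [hJ.2]
    · norm_num
  have hγle : ∀ J ∈ 𝒥, qsum J zs < M → γ ≤ M - qsum J zs := by
    intro J hJ hlt
    have hJ' : J ∈ 𝒥' := by rw [h𝒥', Finset.mem_filter]; exact ⟨hJ, hlt⟩
    rw [hγdef]
    rw [dif_pos ⟨J, hJ'⟩]
    exact Finset.inf'_le _ hJ'
  have hev : ∀ᶠ z in 𝓝 zs, ∀ J ∈ 𝒥, |qsum J z - qsum J zs| < γ / 2 := by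
    rw [eventually_all_finset]
    intro J _
    have hcont : Continuous (fun z : E n => qsum J z) := by
      apply continuous_finset_sum
      intro i _
      exact ((EuclideanSpace.proj (𝕜 := ℝ) i).continuous).pow 2
    have ht := hcont.continuousAt (x := zs)
    have := Metric.tendsto_nhds.mp ht (γ / 2) (by positivity)
    simpa [Real.dist_eq] using this
  rw [Metric.eventually_nhds_iff] at hev
  obtain ⟨δ, hδ0, hδ⟩ := hev
  refine ⟨δ, hδ0, ?_⟩
  intro z y hzδ hy
  set J : Finset (Fin n) := suppF y with hJdef
  have hJcard : J.card ≤ s := hy.1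
  have hJ𝒥 : J ∈ 𝒥 := by rw [h𝒥, Finset.mem_filter]; exact ⟨Finset.mem_univ _, hJcard⟩
  have hyeq : y = coordRestrict J z := proj_eq_cr hy
  have hmaxz : ∀ J' ∈ 𝒥, qsum J' z ≤ qsum J z := by
    intro J' hJ'
    rw [h𝒥, Finset.mem_filter] at hJ'
    exact proj_qmax hy hJ'.2
  obtain ⟨J₀, hJ₀mem, hJ₀⟩ := 𝒥.exists_mem_eq_sup' h𝒥ne (fun J => qsum J zs)
  have hδz := hδ (by rw [dist_eq_norm]; exact hzδ)
  have hJM : qsum J zs = M := by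
    by_contra hne
    have hle : qsum J zs ≤ M := by
      rw [hM]; exact Finset.le_sup' (fun J => qsum J zs) hJ𝒥
    have hlt : qsum J zs < M := lt_of_le_of_ne hle hne
    have hγ := hγle J hJ𝒥 hlt
    have h1 := abs_lt.mp (hδz J hJ𝒥)
    have h2 := abs_lt.mp (hδz J₀ hJ₀mem)
    have h3 := hmaxz J₀ hJ₀mem
    have hM0 : M = qsum J₀ zs := by rw [hM]; exact hJ₀
    linarith
  have hcrP : coordRestrict J zs ∈ projSet (spSet n s) zs := by
    apply proj_of_qmax hJcard
    intro J' hJ'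
    have hmem : J' ∈ 𝒥 := Finset.mem_filter.mpr ⟨Finset.mem_univ _, hJ'⟩
    have hle2 : qsum J' zs ≤ M := by
      rw [hM]; exact Finset.le_sup' (fun J => qsum J zs) hmem
    rw [← hJM] at hle2
    exact hle2
  have hcrp : coordRestrict J zs = p := by
    have := hcrP
    rw [hp] at this
    exact this
  rw [hyeq, ← hcrp]
  exact cr_lipschitz J z zs

lemma mem_spSet_of_tendsto {n s : ℕ} {u : ℕ → E n} {a : E n}
    (hu : ∀ k, u k ∈ spSet n s) (h : Tendsto u atTop (𝓝 a)) : a ∈ spSet n s := by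
  rw [mem_spSet_iff]
  by_contra hcard
  push_neg at hcard
  have hev : ∀ᶠ k in atTop, ∀ i ∈ suppF a, u k i ≠ 0 := by
    rw [eventually_all_finset]
    intro i hi
    have hi0 : a i ≠ 0 := by
      simp only [suppF, Finset.mem_filter, Finset.mem_univ, true_and] at hi
      exact hi
    have hti : Tendsto (fun k => u k i) atTop (𝓝 (a i)) :=
      ((EuclideanSpace.proj (𝕜 := ℝ) i).continuous.tendsto a).comp h
    exact hti.eventually_ne hi0
  obtain ⟨k, hk⟩ := hev.exists
  have hsub : suppF a ⊆ suppF (u k) := by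
    intro i hi
    simp only [suppF, Finset.mem_filter, Finset.mem_univ, true_and]
    exact hk i hi
  have h1 := Finset.card_le_card hsub
  have h2 := (mem_spSet_iff (u k)).mp (hu k)
  omega


/-- if the projection at an accumulation point is a singleton, the whole
PG sequence converges to that accumulation point. -/
theorem stmt5 {n s : ℕ} (hs1 : 1 ≤ s) (hsn : s ≤ n)
    (f : EuclideanSpace ℝ (Fin n) → ℝ)
    (f' : EuclideanSpace ℝ (Fin n) → EuclideanSpace ℝ (Fin n))
    (L lam : ℝ) (hL : 0 < L)
    (hconv : ConvexOn ℝ Set.univ f)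
    (hgrad : ∀ x, HasGradientAt f (f' x) x)
    (hlip : ∀ x y, ‖f' x - f' y‖ ≤ L * ‖x - y‖)
    (hbdd : BddBelow (f '' spSet n s))
    (hlam0 : 0 < lam) (hlamL : lam < 1 / L)
    (w : ℕ → EuclideanSpace ℝ (Fin n))
    (hw0 : w 0 ∈ spSet n s)
    (hiter : ∀ k, w (k + 1) ∈ projSet (spSet n s) (w k - lam • f' (w k)))
    (wstar : EuclideanSpace ℝ (Fin n))
    (haccum : ∃ φ : ℕ → ℕ, StrictMono φ ∧ Tendsto (fun k => w (φ k)) atTop (𝓝 wstar))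
    (hsingleton : ∃ p, projSet (spSet n s) (wstar - lam • f' wstar) = {p}) :
    Tendsto w atTop (𝓝 wstar) := by
  classical
  obtain ⟨φ, hφmono, hφtend⟩ := haccum
  obtain ⟨p, hp⟩ := hsingleton
  have wmem : ∀ k, w k ∈ spSet n s := by
    intro k
    cases k with
    | zero => exact hw0
    | succ k => exact (hiter k).1
  have hlamL' : lam * L < 1 := by
    rw [lt_div_iff₀ hL] at hlamL
    exact hlamL
  have hlam2 : lam * L ≤ 2 := by linarith
  have h2lam : (0:ℝ) < 2 * lam := by linarith
  have hc : (0:ℝ) < 1 / (2 * lam) - L / 2 := by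
    have h1 : L / 2 < 1 / (2 * lam) := by
      rw [div_lt_div_iff₀ two_pos h2lam]
      nlinarith
    linarith
  set c : ℝ := 1 / (2 * lam) - L / 2 with hcdef
  -- sufficient decrease
  have hdec : ∀ k, f (w (k + 1)) + c * ‖w (k + 1) - w k‖ ^ 2 ≤ f (w k) := by
    intro k
    set d := w (k + 1) - w k with hd
    have hle := (hiter k).2 (w k) (wmem k)
    have hsq : ‖(w k - lam • f' (w k)) - w (k + 1)‖ ^ 2
        ≤ ‖(w k - lam • f' (w k)) - w k‖ ^ 2 := by
      nlinarith [norm_nonneg ((w k - lam • f' (w k)) - w (k + 1))]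
    have e1 : (w k - lam • f' (w k)) - w (k + 1) = (w k - w (k + 1)) - lam • f' (w k) := by
      abel
    have e2 : (w k - lam • f' (w k)) - w k = -(lam • f' (w k)) := by abel
    rw [e1, e2, norm_neg] at hsq
    rw [norm_sub_sq_real, real_inner_smul_right, norm_smul, mul_pow,
      Real.norm_eq_abs, sq_abs] at hsq
    -- hsq : ‖w k - w (k+1)‖^2 - 2*(lam*⟪w k - w (k+1), f' (w k)⟫) + lam^2*‖f' (w k)‖^2
    have hIfl : 2 * lam * ⟪f' (w k), d⟫ ≤ -(‖d‖ ^ 2) := by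
      have hcm : ⟪w k - w (k + 1), f' (w k)⟫ = -⟪f' (w k), d⟫ := by
        rw [real_inner_comm, hd, ← inner_neg_right]
        congr 1
        abel
      rw [hcm] at hsq
      have hnd : ‖w k - w (k + 1)‖ = ‖d‖ := by rw [hd, norm_sub_rev]
      rw [hnd] at hsq
      nlinarith [hsq]
    have hdesc := descent_lem hL hgrad hlip (w k) (w (k + 1))
    rw [← hd] at hdesc
    have hI : ⟪f' (w k), d⟫ ≤ -(‖d‖ ^ 2) / (2 * lam) := by
      rw [le_div_iff₀ h2lam]
      nlinarith [hIfl]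
    have hcD : c * ‖d‖ ^ 2 = (1 / (2 * lam)) * ‖d‖ ^ 2 - (L / 2) * ‖d‖ ^ 2 := by
      rw [hcdef]; ring
    have hdiv : (1 / (2 * lam)) * ‖d‖ ^ 2 = ‖d‖ ^ 2 / (2 * lam) := by ring
    have hI' : ⟪f' (w k), d⟫ + ‖d‖ ^ 2 / (2 * lam) ≤ 0 := by
      rw [neg_div] at hI
      linarith
    rw [hcD, hdiv]
    linarith [hdesc, hI']
  have hmono : ∀ k, f (w (k + 1)) ≤ f (w k) := by
    intro k
    have := hdec k
    nlinarith [sq_nonneg ‖w (k + 1) - w k‖, mul_nonneg hc.le (sq_nonneg ‖w (k + 1) - w k‖)]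
  have hant : Antitone (fun k => f (w k)) := antitone_nat_of_succ_le hmono
  obtain ⟨b, hb⟩ := hbdd
  have hlb : ∀ k, b ≤ f (w k) := fun k => hb ⟨w k, wmem k, rfl⟩
  have hbdd2 : BddBelow (Set.range fun k => f (w k)) := by
    refine ⟨b, ?_⟩
    rintro v ⟨k, rfl⟩
    exact hlb k
  have hconvf : Tendsto (fun k => f (w k)) atTop (𝓝 (⨅ k, f (w k))) :=
    tendsto_atTop_ciInf hant hbdd2
  have hconvf2 : Tendsto (fun k => f (w (k + 1))) atTop (𝓝 (⨅ k, f (w k))) :=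
    hconvf.comp (tendsto_add_atTop_nat 1)
  have hdiff0 : Tendsto (fun k => f (w k) - f (w (k + 1))) atTop (𝓝 0) := by
    have := hconvf.sub hconvf2
    simpa using this
  have hsq0 : Tendsto (fun k => ‖w (k + 1) - w k‖ ^ 2) atTop (𝓝 0) := by
    apply squeeze_zero (fun k => sq_nonneg _) (g := fun k => (f (w k) - f (w (k + 1))) / c)
    · intro k
      rw [le_div_iff₀ hc]
      have := hdec k
      linarith
    · have := hdiff0.div_const c
      simpa using this
  have hstep0 : Tendsto (fun k => ‖w (k + 1) - w k‖) atTop (𝓝 0) := by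
    have h2 : Tendsto (fun k => Real.sqrt (‖w (k + 1) - w k‖ ^ 2)) atTop (𝓝 (Real.sqrt 0)) :=
      (Real.continuous_sqrt.tendsto 0).comp hsq0
    simp only [Real.sqrt_zero] at h2
    convert h2 using 2 with k
    rw [Real.sqrt_sq (norm_nonneg _)]
  have hφat : Tendsto φ atTop atTop := hφmono.tendsto_atTop
  have hstepφ : Tendsto (fun k => w (φ k + 1) - w (φ k)) atTop (𝓝 0) := by
    rw [tendsto_zero_iff_norm_tendsto_zero]
    exact hstep0.comp hφat
  have hB : Tendsto (fun k => w (φ k + 1)) atTop (𝓝 wstar) := by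
    have := hstepφ.add hφtend
    simpa using this
  have hgφ : Tendsto (fun k => f' (w (φ k))) atTop (𝓝 (f' wstar)) := by
    rw [tendsto_iff_norm_sub_tendsto_zero]
    apply squeeze_zero (fun k => norm_nonneg _) (g := fun k => L * ‖w (φ k) - wstar‖)
    · intro k
      exact hlip _ _
    · have := (tendsto_iff_norm_sub_tendsto_zero.mp hφtend).const_mul L
      simpa using this
  have hz : Tendsto (fun k => w (φ k) - lam • f' (w (φ k))) atTop
      (𝓝 (wstar - lam • f' wstar)) :=
    hφtend.sub (hgφ.const_smul lam)
  have hwstarmem : wstar ∈ spSet n s := mem_spSet_of_tendsto (fun k => wmem (φ k)) hφtend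
  have hwstarproj : wstar ∈ projSet (spSet n s) (wstar - lam • f' wstar) := by
    refine ⟨hwstarmem, ?_⟩
    intro x hx
    have hkk : ∀ k, ‖(w (φ k) - lam • f' (w (φ k))) - w (φ k + 1)‖
        ≤ ‖(w (φ k) - lam • f' (w (φ k))) - x‖ := fun k => (hiter (φ k)).2 x hx
    have hT1 : Tendsto (fun k => ‖(w (φ k) - lam • f' (w (φ k))) - w (φ k + 1)‖) atTop
        (𝓝 ‖(wstar - lam • f' wstar) - wstar‖) := (hz.sub hB).norm
    have hT2 : Tendsto (fun k => ‖(w (φ k) - lam • f' (w (φ k))) - x‖) atTop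
        (𝓝 ‖(wstar - lam • f' wstar) - x‖) := (hz.sub tendsto_const_nhds).norm
    exact le_of_tendsto_of_tendsto' hT1 hT2 hkk
  have hps : wstar = p := by
    have := hwstarproj
    rw [hp] at this
    exact this
  obtain ⟨δ, hδ0, hδ⟩ := stab (wstar - lam • f' wstar) p hp
  rw [← hps] at hδ
  have hstep1 : ∀ k, ‖w k - wstar‖ < δ → ‖w (k + 1) - wstar‖ ≤ ‖w k - wstar‖ := by
    intro k hk
    have hne := nonexp hL hconv hgrad hlip hlam0.le hlam2 (w k) wstar
    have hlt : ‖(w k - lam • f' (w k)) - (wstar - lam • f' wstar)‖ < δ :=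
      lt_of_le_of_lt hne hk
    have := hδ _ _ hlt (hiter k)
    exact le_trans this hne
  rw [Metric.tendsto_atTop]
  intro ε hε
  have hε' : 0 < min ε δ := lt_min hε hδ0
  obtain ⟨K, hK⟩ := (Metric.tendsto_atTop.mp hφtend) (min ε δ) hε'
  set N := φ K with hN
  have hNlt : ‖w N - wstar‖ < min ε δ := by
    rw [← dist_eq_norm]
    exact hK K le_rfl
  have claim : ∀ m, ‖w (N + m) - wstar‖ ≤ ‖w N - wstar‖ := by
    intro m
    induction m with
    | zero => simp
    | succ m ih =>
      have hlt : ‖w (N + m) - wstar‖ < δ :=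
        lt_of_le_of_lt ih (lt_of_lt_of_le hNlt (min_le_right _ _))
      exact le_trans (hstep1 (N + m) hlt) ih
  refine ⟨N, fun k hk => ?_⟩
  obtain ⟨m, rfl⟩ := Nat.exists_eq_add_of_le hk
  rw [dist_eq_norm]
  exact lt_of_le_of_lt (claim m) (lt_of_lt_of_le hNlt (min_le_left _ _))
end
end

section
/- Let {w^k} be a sequence generated by the projected gradient iteration w^{k+1} ∈ P_{A_s}(w^k − λ∇f(w^k)) with w^0 ∈ A_s, and let w* be an accumulation point of {w^k} such that P_{A_s}(w* − λ∇f(w*)) is a singleton. Suppose further that there exists γ ∈ [0,1) such that for every J ∈ I_{w*} and all w, w′ ∈ A_J, ‖(w − λ∇f(w)) − (w′ − λ∇f(w′))‖ ≤ γ‖w − w′‖ (the gradient step map is a γ-contraction on each A_J with J ∈ I_{w*}). Then {w^k} converges to w* Q-linearly: there exists N₂ ∈ ℕ such that ‖w^{k+1} − w*‖ ≤ γ‖w^k − w*‖ for all k ≥ N₂. -/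
open Filter Topology

noncomputable section

namespace Stmt6Aux

open Finset

variable {n s : ℕ}

lemma normsq (v : EuclideanSpace ℝ (Fin n)) : ‖v‖ ^ 2 = ∑ i, (v i) ^ 2 := by
  rw [EuclideanSpace.norm_eq, Real.sq_sqrt (by positivity)]
  simp [sq_abs]

lemma norm_le_of_sq {a b : EuclideanSpace ℝ (Fin n)} (h : ‖a‖ ^ 2 ≤ ‖b‖ ^ 2) : ‖a‖ ≤ ‖b‖ := by
  have := Real.sqrt_le_sqrt h
  rwa [Real.sqrt_sq (norm_nonneg _), Real.sqrt_sq (norm_nonneg _)] at this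

lemma coord_abs_le (v : EuclideanSpace ℝ (Fin n)) (i : Fin n) : |v i| ≤ ‖v‖ := by
  have h1 : (v i) ^ 2 ≤ ‖v‖ ^ 2 := by
    rw [normsq]
    exact Finset.single_le_sum (f := fun j => (v j)^2) (fun j _ => sq_nonneg _) (Finset.mem_univ i)
  calc |v i| = Real.sqrt ((v i) ^ 2) := (Real.sqrt_sq_eq_abs _).symm
    _ ≤ Real.sqrt (‖v‖ ^ 2) := Real.sqrt_le_sqrt h1
    _ = ‖v‖ := Real.sqrt_sq (norm_nonneg _)

/-- update one coordinate of a vector -/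
def upd (y : EuclideanSpace ℝ (Fin n)) (i : Fin n) (a : ℝ) : EuclideanSpace ℝ (Fin n) :=
  (EuclideanSpace.equiv (Fin n) ℝ).symm (Function.update (fun j => y j) i a)

@[simp] lemma upd_apply (y : EuclideanSpace ℝ (Fin n)) (i : Fin n) (a : ℝ) (j : Fin n) :
    upd y i a j = if j = i then a else y j := by
  simp [upd, EuclideanSpace.equiv, Function.update_apply]

def suppF (y : EuclideanSpace ℝ (Fin n)) : Finset (Fin n) :=
  Finset.univ.filter (fun i => y i ≠ 0)

lemma mem_suppF {y : EuclideanSpace ℝ (Fin n)} {i : Fin n} : i ∈ suppF y ↔ y i ≠ 0 := by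
  simp [suppF]

lemma mem_spSet_iff {y : EuclideanSpace ℝ (Fin n)} : y ∈ spSet n s ↔ (suppF y).card ≤ s :=
  Iff.rfl

lemma sum_sq_upd (z y : EuclideanSpace ℝ (Fin n)) (i : Fin n) (a : ℝ) :
    ∑ j, (z j - upd y i a j) ^ 2 = ∑ j, (z j - y j) ^ 2 - (z i - y i) ^ 2 + (z i - a) ^ 2 := by
  have h : (fun j => (z j - upd y i a j) ^ 2)
      = Function.update (fun j => (z j - y j) ^ 2) i ((z i - a) ^ 2) := by
    funext j
    rcases eq_or_ne j i with rfl | hj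
    · simp
    · simp [hj, Function.update_apply]
  rw [h, Finset.sum_update_of_mem (Finset.mem_univ i)]
  have h2 : ∑ j, (z j - y j) ^ 2
      = (z i - y i) ^ 2 + ∑ j ∈ Finset.univ \ {i}, (z j - y j) ^ 2 := by
    rw [Finset.sum_eq_add_sum_sdiff_singleton_of_mem (Finset.mem_univ i)]
  rw [h2]; ring

lemma normsq_sub_upd (z y : EuclideanSpace ℝ (Fin n)) (i : Fin n) (a : ℝ) :
    ‖z - upd y i a‖ ^ 2 = ‖z - y‖ ^ 2 - (z i - y i) ^ 2 + (z i - a) ^ 2 := by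
  rw [normsq, normsq]
  have e : ∀ (u : EuclideanSpace ℝ (Fin n)) (j : Fin n), (z - u) j = z j - u j := by
    intro u j; simp
  simp only [e]
  exact sum_sq_upd z y i a

lemma suppF_upd_subset (y : EuclideanSpace ℝ (Fin n)) (i : Fin n) (a : ℝ) :
    suppF (upd y i a) ⊆ insert i (suppF y) := by
  intro j hj
  rw [mem_suppF] at hj
  rcases eq_or_ne j i with rfl | h
  · exact Finset.mem_insert_self _ _
  · rw [upd_apply, if_neg h] at hj
    exact Finset.mem_insert_of_mem (mem_suppF.2 hj)

lemma suppF_upd_zero_subset (y : EuclideanSpace ℝ (Fin n)) (i : Fin n) :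
    suppF (upd y i 0) ⊆ (suppF y).erase i := by
  intro j hj
  rw [mem_suppF] at hj
  rcases eq_or_ne j i with rfl | h
  · rw [upd_apply, if_pos rfl] at hj; exact absurd rfl hj
  · rw [upd_apply, if_neg h] at hj
    exact Finset.mem_erase.2 ⟨h, mem_suppF.2 hj⟩

lemma proj_dichotomy {z y : EuclideanSpace ℝ (Fin n)}
    (hy : y ∈ projSet (spSet n s) z) (i : Fin n) : y i = z i ∨ y i = 0 := by
  by_contra h
  push_neg at h
  obtain ⟨h1, h2⟩ := h
  have hmem : upd y i (z i) ∈ spSet n s := by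
    rw [mem_spSet_iff]
    have hsub : suppF (upd y i (z i)) ⊆ suppF y := by
      refine (suppF_upd_subset y i (z i)).trans ?_
      rw [Finset.insert_eq_self.2 (mem_suppF.2 h2)]
    exact le_trans (Finset.card_le_card hsub) hy.1
  have hle := hy.2 _ hmem
  have hsq := pow_le_pow_left₀ (norm_nonneg _) hle 2
  rw [normsq_sub_upd] at hsq
  have : (z i - y i) ^ 2 > 0 := by
    have : z i - y i ≠ 0 := fun h0 => h1 (by linarith [sub_eq_zero.1 h0])
    positivity
  nlinarith

lemma agree {zstar wstar : EuclideanSpace ℝ (Fin n)}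
    (hP : projSet (spSet n s) zstar = {wstar})
    {J : Finset (Fin n)} (hJ : J.card = s) (hsupp : ∀ i ∉ J, wstar i = 0) :
    ∀ i ∈ J, wstar i = zstar i := by
  have hw : wstar ∈ projSet (spSet n s) zstar := by rw [hP]; rfl
  set r := coordRestrict J zstar with hr
  have hra : ∀ i, r i = if i ∈ J then zstar i else 0 := by
    intro i; simp [hr, coordRestrict, EuclideanSpace.equiv]
  have hrmem : r ∈ spSet n s := by
    rw [mem_spSet_iff, ← hJ]
    apply Finset.card_le_card
    intro j hj
    rw [mem_suppF, hra j] at hj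
    by_contra h
    rw [if_neg h] at hj
    exact hj rfl
  have hle := hw.2 r hrmem
  have hsq := pow_le_pow_left₀ (norm_nonneg _) hle 2
  rw [normsq, normsq] at hsq
  have e : ∀ (u : EuclideanSpace ℝ (Fin n)) (j : Fin n), (zstar - u) j = zstar j - u j := by
    intro u j; simp
  simp only [e] at hsq
  have e1 := Finset.sum_sdiff (Finset.subset_univ J) (f := fun i => (zstar i - wstar i) ^ 2)
  have e2 := Finset.sum_sdiff (Finset.subset_univ J) (f := fun i => (zstar i - r i) ^ 2)
  have hout : ∑ i ∈ Finset.univ \ J, (zstar i - wstar i) ^ 2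
      = ∑ i ∈ Finset.univ \ J, (zstar i - r i) ^ 2 := by
    apply Finset.sum_congr rfl
    intro i hi
    rw [Finset.mem_sdiff] at hi
    rw [hsupp i hi.2, hra i, if_neg hi.2]
  have hinr : ∑ i ∈ J, (zstar i - r i) ^ 2 = 0 := by
    apply Finset.sum_eq_zero
    intro i hi
    rw [hra i, if_pos hi]; ring
  have key : ∑ i ∈ J, (zstar i - wstar i) ^ 2 ≤ 0 := by
    rw [← e1, ← e2, hout, hinr] at hsq
    linarith
  have hz := (Finset.sum_eq_zero_iff_of_nonneg (fun i _ => sq_nonneg _)).1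
    (le_antisymm key (Finset.sum_nonneg fun i _ => sq_nonneg _))
  intro i hi
  have := hz i hi
  have h0 : zstar i - wstar i = 0 := by nlinarith [this]
  linarith [sub_eq_zero.1 h0]

lemma agree_supp {zstar wstar : EuclideanSpace ℝ (Fin n)} (hsn : s ≤ n)
    (hP : projSet (spSet n s) zstar = {wstar}) :
    ∀ i, wstar i ≠ 0 → wstar i = zstar i := by
  have hw : wstar ∈ projSet (spSet n s) zstar := by rw [hP]; rfl
  obtain ⟨J, hJs, hJc⟩ := Finset.exists_superset_card_eq hw.1 (by simpa using hsn)
  intro i hi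
  refine agree hP hJc (fun j hj => ?_) i (hJs (mem_suppF.2 hi))
  by_contra h
  exact hj (hJs (mem_suppF.2 h))

lemma gap {zstar wstar : EuclideanSpace ℝ (Fin n)} (hsn : s ≤ n)
    (hP : projSet (spSet n s) zstar = {wstar}) :
    ∀ i, wstar i ≠ 0 → ∀ j, wstar j = 0 → |zstar j| < |zstar i| := by
  have hw : wstar ∈ projSet (spSet n s) zstar := by rw [hP]; rfl
  intro i hi j hj
  by_contra hc
  push_neg at hc
  have hij : j ≠ i := fun h => hi (h ▸ hj)
  have hwz := agree_supp hsn hP i hi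
  set y' := upd (upd wstar i 0) j (zstar j) with hy'
  have hy'mem : y' ∈ spSet n s := by
    rw [mem_spSet_iff]
    have h1 : suppF y' ⊆ insert j ((suppF wstar).erase i) :=
      (suppF_upd_subset _ _ _).trans (Finset.insert_subset_insert _ (suppF_upd_zero_subset _ _))
    have hiw : i ∈ suppF wstar := mem_suppF.2 hi
    have h2 : (insert j ((suppF wstar).erase i)).card ≤ (suppF wstar).card := by
      have := Finset.card_insert_le j ((suppF wstar).erase i)
      have h3 := Finset.card_erase_of_mem hiw
      have h4 : 1 ≤ (suppF wstar).card := Finset.card_pos.2 ⟨i, hiw⟩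
      omega
    exact le_trans (Finset.card_le_card h1) (le_trans h2 hw.1)
  have hji : ((upd wstar i 0) j) = 0 := by
    rw [upd_apply, if_neg hij]; exact hj
  have e2 := normsq_sub_upd zstar (upd wstar i 0) j (zstar j)
  have e1 := normsq_sub_upd zstar wstar i 0
  rw [hji] at e2
  have hsqle : zstar i ^ 2 ≤ zstar j ^ 2 := by
    have := pow_le_pow_left₀ (abs_nonneg _) hc 2
    simpa [sq_abs] using this
  have hle : ‖zstar - y'‖ ^ 2 ≤ ‖zstar - wstar‖ ^ 2 := by
    rw [← hy'] at e2
    rw [e2, e1, hwz]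
    nlinarith
  have hy'proj : y' ∈ projSet (spSet n s) zstar :=
    ⟨hy'mem, fun x hx => le_trans (norm_le_of_sq hle) (hw.2 x hx)⟩
  rw [hP] at hy'proj
  have heq : y' = wstar := hy'proj
  have : y' i = 0 := by
    rw [hy', upd_apply, if_neg (Ne.symm hij), upd_apply, if_pos rfl]
  rw [heq] at this
  exact hi this

lemma supp_stable {zstar wstar : EuclideanSpace ℝ (Fin n)} (hn : 0 < n) (hsn : s ≤ n)
    (hP : projSet (spSet n s) zstar = {wstar}) :
    ∃ δ > 0, ∀ z y, ‖z - zstar‖ < δ → y ∈ projSet (spSet n s) z →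
      ∀ i, wstar i ≠ 0 → ¬ (y i = 0) := by
  have hw : wstar ∈ projSet (spSet n s) zstar := by rw [hP]; rfl
  have hne : (Finset.univ : Finset (Fin n)).Nonempty := ⟨⟨0, hn⟩, Finset.mem_univ _⟩
  set M : ℝ := Finset.univ.sup' hne (fun j => if wstar j = 0 then |zstar j| else 0) with hM
  have hM0 : 0 ≤ M := by
    obtain ⟨j, hj⟩ := hne
    refine le_trans ?_ (Finset.le_sup' _ hj)
    by_cases h : wstar j = 0 <;> simp [h, abs_nonneg]
  have habs : ∀ i, wstar i ≠ 0 → 0 < |zstar i| := by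
    intro i hi
    rw [abs_pos]
    rw [← agree_supp hsn hP i hi]
    exact hi
  have hMlt : ∀ i, wstar i ≠ 0 → M < |zstar i| := by
    intro i hi
    rw [hM, Finset.sup'_lt_iff]
    intro j _
    by_cases hj : wstar j = 0
    · simpa [hj] using gap hsn hP i hi j hj
    · simpa [hj] using habs i hi
  set δ : ℝ := Finset.univ.inf' hne (fun i => if wstar i = 0 then 1 else (|zstar i| - M) / 2)
    with hδdef
  have hδpos : 0 < δ := by
    rw [hδdef, Finset.lt_inf'_iff]
    intro i _
    by_cases h : wstar i = 0
    · simp [h]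
    · simp only [h, if_false]
      linarith [hMlt i h]
  refine ⟨δ, hδpos, ?_⟩
  intro z y hz hy i hwi hyi
  have hδle : δ ≤ (|zstar i| - M) / 2 := by
    refine le_trans (Finset.inf'_le _ (Finset.mem_univ i)) ?_
    simp [hwi]
  have hzi : |z i - zstar i| < δ := by
    refine lt_of_le_of_lt ?_ hz
    have := coord_abs_le (z - zstar) i
    simpa using this
  have hziabs : (|zstar i| + M) / 2 < |z i| := by
    have h1 : |zstar i| - |z i| ≤ |z i - zstar i| := by
      have := abs_sub_abs_le_abs_sub (zstar i) (z i)
      rwa [abs_sub_comm] at this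
    linarith
  have hzipos : 0 < |z i| := lt_of_le_of_lt (by linarith [habs i hwi]) hziabs
  have hzi0 : z i ≠ 0 := by
    intro h; rw [h] at hzipos; simp at hzipos
  by_cases hcard : (suppF y).card < s
  · -- room to add coordinate i
    have hy'mem : upd y i (z i) ∈ spSet n s := by
      rw [mem_spSet_iff]
      refine le_trans (Finset.card_le_card (suppF_upd_subset y i (z i))) ?_
      refine le_trans (Finset.card_insert_le _ _) ?_
      omega
    have hle := hy.2 _ hy'mem
    have hsq := pow_le_pow_left₀ (norm_nonneg _) hle 2
    rw [normsq_sub_upd, hyi] at hsq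
    have hzsq : 0 < (z i) ^ 2 := (sq_nonneg _).lt_of_ne (Ne.symm (pow_ne_zero 2 hzi0))
    nlinarith [hzsq]
  · -- support is full; swap a coordinate outside supp wstar
    have hcards : (suppF y).card = s := le_antisymm hy.1 (not_lt.1 hcard)
    have hex : ∃ j ∈ suppF y, wstar j = 0 := by
      by_contra hcon
      push_neg at hcon
      have hsub : suppF y ⊆ (suppF wstar).erase i := by
        intro j hj
        refine Finset.mem_erase.2 ⟨?_, mem_suppF.2 (hcon j hj)⟩
        intro h
        rw [h, mem_suppF] at hj
        exact hj hyi
      have h1 := Finset.card_le_card hsub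
      have h2 := Finset.card_erase_of_mem (mem_suppF.2 hwi)
      have h3 := hw.1
      have h4 : 1 ≤ (suppF wstar).card := Finset.card_pos.2 ⟨i, mem_suppF.2 hwi⟩
      rw [mem_spSet_iff] at h3
      omega
    obtain ⟨j, hjy, hjw⟩ := hex
    have hjne : y j ≠ 0 := mem_suppF.1 hjy
    have hji : j ≠ i := fun h => hjne (h ▸ hyi)
    have hyz : y j = z j := (proj_dichotomy hy j).resolve_right hjne
    have hzj : |z j| < |z i| := by
      have h1 : |z j - zstar j| < δ := by
        refine lt_of_le_of_lt ?_ hz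
        have := coord_abs_le (z - zstar) j
        simpa using this
      have h2 : |zstar j| ≤ M := by
        refine le_trans ?_ (Finset.le_sup' _ (Finset.mem_univ j))
        simp [hjw]
      have h3 : |z j| ≤ |zstar j| + |z j - zstar j| := by
        have := abs_sub_abs_le_abs_sub (z j) (zstar j)
        linarith [abs_nonneg (z j - zstar j)]
      linarith
    set y' := upd (upd y j 0) i (z i) with hy'
    have hy'mem : y' ∈ spSet n s := by
      rw [mem_spSet_iff]
      have h1 : suppF y' ⊆ insert i ((suppF y).erase j) :=
        (suppF_upd_subset _ _ _).trans (Finset.insert_subset_insert _ (suppF_upd_zero_subset _ _))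
      refine le_trans (Finset.card_le_card h1) ?_
      refine le_trans (Finset.card_insert_le _ _) ?_
      have h2 := Finset.card_erase_of_mem hjy
      have h5 : 1 ≤ s := hcards ▸ Finset.card_pos.2 ⟨j, hjy⟩
      omega
    have hle := hy.2 _ hy'mem
    have hsq := pow_le_pow_left₀ (norm_nonneg _) hle 2
    have e2 := normsq_sub_upd z (upd y j 0) i (z i)
    have e1 := normsq_sub_upd z y j 0
    have hii : ((upd y j 0) i) = y i := by rw [upd_apply, if_neg (Ne.symm hji)]
    rw [← hy'] at e2
    rw [e2, e1, hii, hyi, hyz] at hsq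
    have hsq2 : z j ^ 2 < z i ^ 2 := by
      have := pow_lt_pow_left₀ hzj (abs_nonneg _) (two_ne_zero)
      simpa [sq_abs] using this
    nlinarith

lemma proj_close {zstar wstar : EuclideanSpace ℝ (Fin n)} (hsn : s ≤ n)
    (hP : projSet (spSet n s) zstar = {wstar})
    {z y : EuclideanSpace ℝ (Fin n)} (hy : y ∈ projSet (spSet n s) z)
    (hS : ∀ i, wstar i ≠ 0 → ¬ (y i = 0)) :
    ‖y - wstar‖ ≤ ‖z - zstar‖ := by
  obtain ⟨J, hJs, hJc⟩ := Finset.exists_superset_card_eq hy.1 (by simpa using hsn)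
  have hwsupp : ∀ i ∉ J, wstar i = 0 := by
    intro i hi
    by_contra h
    exact hi (hJs (mem_suppF.2 fun h0 => hS i h h0))
  have hagree := agree hP hJc hwsupp
  apply norm_le_of_sq
  rw [normsq, normsq]
  have e : ∀ (a b : EuclideanSpace ℝ (Fin n)) (j : Fin n), (a - b) j = a j - b j := by
    intro a b j; simp
  simp only [e]
  apply Finset.sum_le_sum
  intro i _
  by_cases hiJ : i ∈ J
  · rcases proj_dichotomy hy i with h | h
    · rw [h, hagree i hiJ]
    · have hw0 : wstar i = 0 := by
        by_contra hw
        exact hS i hw h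
      rw [h, hw0]
      simpa using sq_nonneg (z i - zstar i)
  · have hy0 : y i = 0 := by
      by_contra h
      exact hiJ (hJs (mem_suppF.2 h))
    rw [hy0, hwsupp i hiJ]
    simpa using sq_nonneg (z i - zstar i)

lemma isClosed_spSet (hsn : s ≤ n) : IsClosed (spSet n s) := by
  have heq : spSet n s = ⋃ J ∈ {J : Finset (Fin n) | J.card = s}, coordSub J := by
    ext w
    simp only [Set.mem_iUnion, Set.mem_setOf_eq, exists_prop]
    constructor
    · intro hw
      obtain ⟨J, hJs, hJc⟩ := Finset.exists_superset_card_eq hw (by simpa using hsn)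
      refine ⟨J, hJc, fun i hi => ?_⟩
      by_contra h
      exact hi (hJs (mem_suppF.2 h))
    · rintro ⟨J, hJ, hw⟩
      show (suppF w).card ≤ s
      rw [← hJ]
      apply Finset.card_le_card
      intro i hi
      by_contra h
      exact (mem_suppF.1 hi) (hw i h)
  rw [heq]
  apply Set.Finite.isClosed_biUnion (Set.toFinite _)
  intro J _
  have h2 : coordSub J = ⋂ (i : Fin n), ⋂ (_ : i ∉ J), {w : EuclideanSpace ℝ (Fin n) | w i = 0} := by
    ext w
    simp [coordSub, Set.mem_iInter]
  rw [h2]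
  apply isClosed_iInter
  intro i
  apply isClosed_iInter
  intro _
  have hc : Continuous (fun w : EuclideanSpace ℝ (Fin n) => w i) := by
    have := (EuclideanSpace.proj (𝕜 := ℝ) i).cont
    simpa [EuclideanSpace.proj] using this
  exact isClosed_eq hc continuous_const

lemma descent (f : EuclideanSpace ℝ (Fin n) → ℝ) (f' : EuclideanSpace ℝ (Fin n) → EuclideanSpace ℝ (Fin n))
    (L : ℝ) (hL : 0 ≤ L)
    (hgrad : ∀ x, HasGradientAt f (f' x) x)
    (hlip : ∀ x y, ‖f' x - f' y‖ ≤ L * ‖x - y‖) (x y : EuclideanSpace ℝ (Fin n)) :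
    f y ≤ f x + (inner ℝ (f' x) (y - x) : ℝ) + L / 2 * ‖y - x‖ ^ 2 := by
  set d := y - x with hd
  set g : ℝ → ℝ := fun t => f (x + t • d) - t * (inner ℝ (f' x) d : ℝ) - t ^ 2 * (L / 2 * ‖d‖ ^ 2)
    with hg
  have hgd : ∀ t : ℝ, HasDerivAt g
      ((inner ℝ (f' (x + t • d)) d : ℝ) - (inner ℝ (f' x) d : ℝ) - t * (L * ‖d‖ ^ 2)) t := by
    intro t
    have hline : HasDerivAt (fun t : ℝ => x + t • d) d t := by
      simpa using ((hasDerivAt_id t).smul_const d).const_add x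
    have h1 : HasDerivAt (fun t : ℝ => f (x + t • d)) ((inner ℝ (f' (x + t • d)) d : ℝ)) t := by
      have h0 := (hasGradientAt_iff_hasFDerivAt.1 (hgrad (x + t • d))).comp_hasDerivAt t hline
      simp only [InnerProductSpace.toDual_apply_apply] at h0
      exact h0
    have h2 : HasDerivAt (fun t : ℝ => t * (inner ℝ (f' x) d : ℝ)) ((inner ℝ (f' x) d : ℝ)) t := by
      simpa using (hasDerivAt_id t).mul_const (inner ℝ (f' x) d : ℝ)
    have h3 : HasDerivAt (fun t : ℝ => t ^ 2 * (L / 2 * ‖d‖ ^ 2))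
        ((2 * t ^ 1) * (L / 2 * ‖d‖ ^ 2)) t := by
      simpa using (hasDerivAt_pow 2 t).mul_const (L / 2 * ‖d‖ ^ 2)
    have h4 := (h1.sub h2).sub h3
    convert h4 using 1
    · rfl
    · rfl
    · rfl
    ring
  have hanti : AntitoneOn g (Set.Icc 0 1) := by
    apply antitoneOn_of_deriv_nonpos (convex_Icc 0 1)
    · exact fun t _ => ((hgd t).continuousAt).continuousWithinAt
    · exact fun t _ => ((hgd t).differentiableAt).differentiableWithinAt
    · intro t ht
      rw [interior_Icc] at ht
      rw [(hgd t).deriv]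
      have h4 : (inner ℝ (f' (x + t • d)) d : ℝ) - (inner ℝ (f' x) d : ℝ)
          = (inner ℝ (f' (x + t • d) - f' x) d : ℝ) := (inner_sub_left _ _ _).symm
      have h5 : (inner ℝ (f' (x + t • d) - f' x) d : ℝ) ≤ t * (L * ‖d‖ ^ 2) := by
        calc (inner ℝ (f' (x + t • d) - f' x) d : ℝ) ≤ ‖f' (x + t • d) - f' x‖ * ‖d‖ :=
              real_inner_le_norm _ _
          _ ≤ (L * ‖x + t • d - x‖) * ‖d‖ :=
              mul_le_mul_of_nonneg_right (hlip _ _) (norm_nonneg _)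
          _ = t * (L * ‖d‖ ^ 2) := by
              rw [add_sub_cancel_left, norm_smul, Real.norm_eq_abs, abs_of_pos ht.1]
              ring
      linarith [h4 ▸ h5]
  have h01 := hanti (Set.left_mem_Icc.2 zero_le_one) (Set.right_mem_Icc.2 zero_le_one) zero_le_one
  have hg0 : g 0 = f x := by simp [hg]
  have hg1 : g 1 = f y - (inner ℝ (f' x) d : ℝ) - L / 2 * ‖d‖ ^ 2 := by
    simp [hg, hd]
  rw [hg0, hg1] at h01
  linarith

end Stmt6Aux

open Stmt6Aux Finset

/-- Q-linear convergence of PG under a contraction assumption on the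
gradient-step map over the active subspaces. -/
theorem stmt6 {n s : ℕ} (hs1 : 1 ≤ s) (hsn : s ≤ n)
    (f : EuclideanSpace ℝ (Fin n) → ℝ)
    (f' : EuclideanSpace ℝ (Fin n) → EuclideanSpace ℝ (Fin n))
    (L lam : ℝ) (hL : 0 < L)
    (hconv : ConvexOn ℝ Set.univ f)
    (hgrad : ∀ x, HasGradientAt f (f' x) x)
    (hlip : ∀ x y, ‖f' x - f' y‖ ≤ L * ‖x - y‖)
    (hbdd : BddBelow (f '' spSet n s))
    (hlam0 : 0 < lam) (hlamL : lam < 1 / L)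
    (w : ℕ → EuclideanSpace ℝ (Fin n))
    (hw0 : w 0 ∈ spSet n s)
    (hiter : ∀ k, w (k + 1) ∈ projSet (spSet n s) (w k - lam • f' (w k)))
    (wstar : EuclideanSpace ℝ (Fin n))
    (haccum : ∃ φ : ℕ → ℕ, StrictMono φ ∧ Tendsto (fun k => w (φ k)) atTop (𝓝 wstar))
    (hsingleton : ∃ p, projSet (spSet n s) (wstar - lam • f' wstar) = {p})
    (γ : ℝ) (hγ0 : 0 ≤ γ) (hγ1 : γ < 1)
    (hcontract : ∀ J : Finset (Fin n), J.card = s → wstar ∈ coordSub J →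
      ∀ u ∈ coordSub J, ∀ v ∈ coordSub J,
        ‖(u - lam • f' u) - (v - lam • f' v)‖ ≤ γ * ‖u - v‖) :
    ∃ N₂ : ℕ, ∀ k ≥ N₂, ‖w (k + 1) - wstar‖ ≤ γ * ‖w k - wstar‖ := by
  classical
  have hmem : ∀ k, w k ∈ spSet n s := by
    intro k
    induction k with
    | zero => exact hw0
    | succ k _ => exact (hiter k).1
  have hlamL' : lam * L < 1 := (lt_div_iff₀ hL).1 hlamL
  have hcpos : 0 < 1 / (2 * lam) - L / 2 := by
    rw [sub_pos, div_lt_div_iff₀ two_pos (by positivity)]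
    nlinarith
  have hdec : ∀ k, f (w (k + 1)) + (1 / (2 * lam) - L / 2) * ‖w k - w (k + 1)‖ ^ 2 ≤ f (w k) := by
    intro k
    have hle := (hiter k).2 (w k) (hmem k)
    have hsq := pow_le_pow_left₀ (norm_nonneg _) hle 2
    have e1 : (w k - lam • f' (w k)) - w k = -(lam • f' (w k)) := by abel
    have e2 : (w k - lam • f' (w k)) - w (k + 1) = (w k - w (k + 1)) - lam • f' (w k) := by abel
    rw [e1, e2, norm_neg, norm_sub_sq_real, real_inner_smul_right] at hsq
    have hinner : ‖w k - w (k + 1)‖ ^ 2 / (2 * lam) ≤ (inner ℝ (w k - w (k + 1)) (f' (w k)) : ℝ) := by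
      rw [div_le_iff₀ (by positivity : (0:ℝ) < 2 * lam)]
      nlinarith [hsq]
    have hdesc := descent f f' L hL.le hgrad hlip (w k) (w (k + 1))
    have hsym : (inner ℝ (f' (w k)) (w (k + 1) - w k) : ℝ)
        = -(inner ℝ (w k - w (k + 1)) (f' (w k)) : ℝ) := by
      rw [real_inner_comm, show w (k + 1) - w k = -(w k - w (k + 1)) by abel, inner_neg_left]
    have hnorm : ‖w (k + 1) - w k‖ = ‖w k - w (k + 1)‖ := norm_sub_rev _ _
    rw [hsym, hnorm] at hdesc
    have h6 : (1 / (2 * lam) - L / 2) * ‖w k - w (k + 1)‖ ^ 2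
        = ‖w k - w (k + 1)‖ ^ 2 / (2 * lam) - L / 2 * ‖w k - w (k + 1)‖ ^ 2 := by ring
    linarith [hinner, hdesc, h6]
  obtain ⟨B, hB⟩ := hbdd
  have hBk : ∀ k, B ≤ f (w k) := fun k => hB ⟨w k, hmem k, rfl⟩
  have hanti : Antitone (fun k => f (w k)) := by
    apply antitone_nat_of_succ_le
    intro k
    have h1 := hdec k
    nlinarith [mul_nonneg hcpos.le (sq_nonneg ‖w k - w (k + 1)‖)]
  have hconvf : Tendsto (fun k => f (w k)) atTop (𝓝 (⨅ k, f (w k))) :=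
    tendsto_atTop_ciInf hanti ⟨B, by rintro x ⟨k, rfl⟩; exact hBk k⟩
  have hdiff0 : Tendsto (fun k => f (w k) - f (w (k + 1))) atTop (𝓝 0) := by
    have h2 : Tendsto (fun k => f (w (k + 1))) atTop (𝓝 (⨅ k, f (w k))) :=
      hconvf.comp (Filter.tendsto_add_atTop_nat 1)
    simpa using hconvf.sub h2
  have hstep0 : Tendsto (fun k => ‖w k - w (k + 1)‖ ^ 2) atTop (𝓝 0) := by
    apply squeeze_zero (fun k => sq_nonneg _)
      (g := fun k => (1 / (1 / (2 * lam) - L / 2)) * (f (w k) - f (w (k + 1))))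
    · intro k
      have h1 := hdec k
      rw [show (1 / (1 / (2 * lam) - L / 2)) * (f (w k) - f (w (k + 1)))
          = (f (w k) - f (w (k + 1))) / (1 / (2 * lam) - L / 2) by ring,
        le_div_iff₀ hcpos]
      nlinarith
    · simpa using hdiff0.const_mul (1 / (1 / (2 * lam) - L / 2))
  have hstepn : Tendsto (fun k => w (k + 1) - w k) atTop (𝓝 0) := by
    rw [tendsto_zero_iff_norm_tendsto_zero]
    have h := hstep0.sqrt
    simp only [Real.sqrt_zero] at h
    have heq : ∀ k, Real.sqrt (‖w k - w (k + 1)‖ ^ 2) = ‖w (k + 1) - w k‖ := by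
      intro k
      rw [Real.sqrt_sq (norm_nonneg _), norm_sub_rev]
    simpa [heq] using h
  obtain ⟨φ, hφmono, hφtend⟩ := haccum
  have hφ1 : Tendsto (fun k => w (φ k + 1)) atTop (𝓝 wstar) := by
    have h1 : Tendsto (fun k => w (φ k + 1) - w (φ k)) atTop (𝓝 0) :=
      hstepn.comp hφmono.tendsto_atTop
    have h2 := hφtend.add h1
    simp only [add_zero] at h2
    convert h2 using 2 with k
    abel
  have hf'cont : Tendsto (fun k => f' (w (φ k))) atTop (𝓝 (f' wstar)) := by
    rw [tendsto_iff_norm_sub_tendsto_zero]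
    apply squeeze_zero (fun k => norm_nonneg _) (fun k => hlip _ _)
    have h1 := (tendsto_iff_norm_sub_tendsto_zero.1 hφtend).const_mul L
    simpa using h1
  have hztend : Tendsto (fun k => w (φ k) - lam • f' (w (φ k))) atTop
      (𝓝 (wstar - lam • f' wstar)) := hφtend.sub (hf'cont.const_smul lam)
  have hwstar_mem : wstar ∈ spSet n s :=
    (isClosed_spSet hsn).mem_of_tendsto hφtend (Filter.Eventually.of_forall fun k => hmem _)
  have hwproj : wstar ∈ projSet (spSet n s) (wstar - lam • f' wstar) := by
    refine ⟨hwstar_mem, fun x hx => ?_⟩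
    have hk : ∀ k, ‖(w (φ k) - lam • f' (w (φ k))) - w (φ k + 1)‖
        ≤ ‖(w (φ k) - lam • f' (w (φ k))) - x‖ := fun k => (hiter (φ k)).2 x hx
    exact le_of_tendsto_of_tendsto' ((hztend.sub hφ1).norm)
      ((hztend.sub tendsto_const_nhds).norm) hk
  obtain ⟨p, hp⟩ := hsingleton
  have hP : projSet (spSet n s) (wstar - lam • f' wstar) = {wstar} := by
    rw [hp] at hwproj ⊢
    rw [show p = wstar from (Set.mem_singleton_iff.1 hwproj).symm]
  set zstar := wstar - lam • f' wstar with hzstar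
  obtain ⟨δ, hδ0, hδ⟩ := supp_stable (lt_of_lt_of_le hs1 hsn) hsn hP
  have hne : (Finset.univ : Finset (Fin n)).Nonempty :=
    ⟨⟨0, lt_of_lt_of_le hs1 hsn⟩, Finset.mem_univ _⟩
  set ε₂ : ℝ := Finset.univ.inf' hne (fun i => if wstar i = 0 then 1 else |wstar i|) with hε₂def
  have hε₂ : 0 < ε₂ := by
    rw [hε₂def, Finset.lt_inf'_iff]
    intro i _
    by_cases h : wstar i = 0 <;> simp [h, abs_pos]
  set ε : ℝ := min δ ε₂ with hεdef
  have hε : 0 < ε := lt_min hδ0 hε₂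
  obtain ⟨K, hK⟩ := (Metric.tendsto_atTop.1 hφtend) ε hε
  refine ⟨φ K, ?_⟩
  have hstepkey : ∀ k, ‖w k - wstar‖ < ε → ‖w (k + 1) - wstar‖ ≤ γ * ‖w k - wstar‖ := by
    intro k hk
    obtain ⟨J, hJs, hJc⟩ := Finset.exists_superset_card_eq (hmem k) (by simpa using hsn)
    have hwkJ : w k ∈ coordSub J := by
      intro i hi
      by_contra h
      exact hi (hJs (mem_suppF.2 h))
    have hwJ : wstar ∈ coordSub J := by
      intro i hi
      by_contra hwi
      have h1 : |w k i - wstar i| < ε := by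
        refine lt_of_le_of_lt ?_ hk
        have := coord_abs_le (w k - wstar) i
        simpa using this
      have h2 : ε ≤ |wstar i| := by
        refine le_trans (min_le_right _ _) ?_
        refine le_trans (Finset.inf'_le _ (Finset.mem_univ i)) ?_
        simp [hwi]
      have h3 : w k i ≠ 0 := by
        intro h0
        rw [h0] at h1
        rw [zero_sub, abs_neg] at h1
        linarith
      exact hi (hJs (mem_suppF.2 h3))
    have hcon := hcontract J hJc hwJ (w k) hwkJ wstar hwJ
    have hlt : ‖(w k - lam • f' (w k)) - zstar‖ < δ := by
      calc ‖(w k - lam • f' (w k)) - zstar‖ ≤ γ * ‖w k - wstar‖ := hcon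
        _ ≤ 1 * ‖w k - wstar‖ := mul_le_mul_of_nonneg_right hγ1.le (norm_nonneg _)
        _ = ‖w k - wstar‖ := one_mul _
        _ < ε := hk
        _ ≤ δ := min_le_left _ _
    have hSy := hδ _ _ hlt (hiter k)
    exact le_trans (proj_close hsn hP (hiter k) hSy) hcon
  have hinv : ∀ j, ‖w (φ K + j) - wstar‖ < ε := by
    intro j
    induction j with
    | zero => simpa [dist_eq_norm] using hK K le_rfl
    | succ j ih =>
      have h1 := hstepkey _ ih
      calc ‖w (φ K + j + 1) - wstar‖ ≤ γ * ‖w (φ K + j) - wstar‖ := h1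
        _ ≤ 1 * ‖w (φ K + j) - wstar‖ := mul_le_mul_of_nonneg_right hγ1.le (norm_nonneg _)
        _ = ‖w (φ K + j) - wstar‖ := one_mul _
        _ < ε := ih
  intro k hkK
  obtain ⟨j, rfl⟩ := Nat.exists_eq_add_of_le hkK
  exact hstepkey _ (hinv j)
end
end

section
/- Let {w^k} be a sequence generated by the projected gradient iteration w^{k+1} ∈ P_{A_s}(w^k − λ∇f(w^k)) with w^0 ∈ A_s, and suppose w^k → w*. Then the objective gap converges at rate o(1/k): lim_{k→∞} k·(f(w^k) − f(w*)) = 0. -/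
open Filter Topology InnerProductSpace Set
noncomputable section

section aux
variable {E : Type*} [NormedAddCommGroup E] [InnerProductSpace ℝ E] [CompleteSpace E]

lemma myLineDeriv (f : E → ℝ) (f' : E → E) (hgrad : ∀ x, HasGradientAt f (f' x) x)
    (x v : E) (t : ℝ) :
    HasDerivAt (fun t : ℝ => f (x + t • v)) (inner ℝ (f' (x + t • v)) v : ℝ) t := by
  have hline : HasDerivAt (fun t : ℝ => x + t • v) v t := by
    simpa using ((hasDerivAt_id t).smul_const v).const_add x
  have h := ((hgrad (x + t • v)).hasFDerivAt).comp_hasDerivAt t hline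
  simp [InnerProductSpace.toDual_apply_apply] at h; exact h

lemma grad_convex_ineq (f : E → ℝ) (f' : E → E) (hconv : ConvexOn ℝ Set.univ f)
    (hgrad : ∀ x, HasGradientAt f (f' x) x) (x y : E) :
    f x + (inner ℝ (f' x) (y - x) : ℝ) ≤ f y := by
  set v := y - x with hv
  have hd : HasDerivAt (fun t : ℝ => f (x + t • v)) (inner ℝ (f' x) v : ℝ) 0 := by
    simpa using myLineDeriv f f' hgrad x v 0
  have hslope : Tendsto (slope (fun t : ℝ => f (x + t • v)) 0) (𝓝[>] 0)
      (𝓝 (inner ℝ (f' x) v : ℝ)) :=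
    ((hasDerivAt_iff_tendsto_slope.1 hd).mono_left
      (nhdsWithin_mono _ (fun t ht => ht.ne')))
  have hle : ∀ᶠ t in 𝓝[>] (0:ℝ), slope (fun t : ℝ => f (x + t • v)) 0 t ≤ f y - f x := by
    filter_upwards [Ioc_mem_nhdsGT_of_mem (by norm_num : (0:ℝ) ∈ Ico (0:ℝ) 1)] with t ht
    have ht0 : 0 < t := ht.1
    have hcvx : f ((1 - t) • x + t • y) ≤ (1 - t) * f x + t * f y :=
      hconv.2 (mem_univ x) (mem_univ y)
        (show (0:ℝ) ≤ 1 - t by linarith [ht.2]) ht0.le (by ring)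
    have hpt : (1 - t) • x + t • y = x + t • v := by rw [hv]; module
    rw [hpt] at hcvx
    rw [slope_def_field, sub_zero, div_le_iff₀ ht0]
    simp only [zero_smul, add_zero]
    nlinarith [hcvx]
  have hfin := le_of_tendsto hslope hle
  linarith [hfin]

lemma grad_descent_ineq (f : E → ℝ) (f' : E → E) (L : ℝ)
    (hgrad : ∀ x, HasGradientAt f (f' x) x)
    (hlip : ∀ x y, ‖f' x - f' y‖ ≤ L * ‖x - y‖) (x y : E) :
    f y ≤ f x + (inner ℝ (f' x) (y - x) : ℝ) + L / 2 * ‖y - x‖ ^ 2 := by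
  set v := y - x with hv
  set ψ : ℝ → ℝ := fun t =>
    L / 2 * t ^ 2 * ‖v‖ ^ 2 + f x + t * (inner ℝ (f' x) v : ℝ) - f (x + t • v) with hψ
  have hψd : ∀ t : ℝ, HasDerivAt ψ
      (L * t * ‖v‖ ^ 2 + (inner ℝ (f' x) v : ℝ) - (inner ℝ (f' (x + t • v)) v : ℝ)) t := by
    intro t
    have h1 : HasDerivAt (fun t : ℝ => L / 2 * t ^ 2 * ‖v‖ ^ 2 + f x
        + t * (inner ℝ (f' x) v : ℝ)) (L * t * ‖v‖ ^ 2 + (inner ℝ (f' x) v : ℝ)) t := by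
      have := (((hasDerivAt_pow 2 t).const_mul (L / 2)).mul_const (‖v‖ ^ 2)).add_const (f x)
      have h2 := (hasDerivAt_id t).mul_const (inner ℝ (f' x) v : ℝ)
      refine (this.add h2).congr_deriv ?_
      ring
    exact h1.sub (myLineDeriv f f' hgrad x v t)
  have hmono : MonotoneOn ψ (Set.Ici (0:ℝ)) := by
    apply monotoneOn_of_deriv_nonneg (convex_Ici 0)
    · exact (fun t _ => ((hψd t).differentiableAt.continuousAt.continuousWithinAt))
    · exact fun t _ => ((hψd t).differentiableAt.differentiableWithinAt)
    · intro t ht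
      rw [interior_Ici] at ht
      rw [(hψd t).deriv]
      have h3 : (inner ℝ (f' (x + t • v) - f' x) v : ℝ) ≤ L * t * ‖v‖ ^ 2 := by
        calc (inner ℝ (f' (x + t • v) - f' x) v : ℝ) ≤ ‖f' (x + t • v) - f' x‖ * ‖v‖ :=
              real_inner_le_norm _ _
          _ ≤ L * ‖(x + t • v) - x‖ * ‖v‖ := by
              have := hlip (x + t • v) x
              have hvn : (0:ℝ) ≤ ‖v‖ := norm_nonneg _
              nlinarith [this]
          _ = L * t * ‖v‖ ^ 2 := by
              simp [norm_smul, abs_of_pos (show (0:ℝ) < t from ht)]; ring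
      rw [inner_sub_left] at h3
      linarith
  have h01 := hmono (Set.self_mem_Ici) (show (1:ℝ) ∈ Set.Ici (0:ℝ) by norm_num) zero_le_one
  simp only [hψ] at h01
  simp only [zero_smul, add_zero, one_smul, zero_pow, mul_zero, zero_mul, one_pow, mul_one,
    one_mul] at h01
  have hxy : x + v = y := by rw [hv]; abel
  rw [hxy] at h01
  linarith

lemma my_three_point (a b c : E) :
    ‖a - c‖ ^ 2 = ‖a - b‖ ^ 2 + ‖b - c‖ ^ 2 + 2 * (inner ℝ (a - b) (b - c) : ℝ) := by
  have h := norm_add_sq_real (a - b) (b - c)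
  rw [sub_add_sub_cancel] at h
  linarith

end aux

set_option maxHeartbeats 1000000 in
/-- if the PG iterates converge, the objective gap is $o(1/k)$. -/
theorem stmt7 {n s : ℕ} (hs1 : 1 ≤ s) (hsn : s ≤ n)
    (f : EuclideanSpace ℝ (Fin n) → ℝ)
    (f' : EuclideanSpace ℝ (Fin n) → EuclideanSpace ℝ (Fin n))
    (L lam : ℝ) (hL : 0 < L)
    (hconv : ConvexOn ℝ Set.univ f)
    (hgrad : ∀ x, HasGradientAt f (f' x) x)
    (hlip : ∀ x y, ‖f' x - f' y‖ ≤ L * ‖x - y‖)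
    (hbdd : BddBelow (f '' spSet n s))
    (hlam0 : 0 < lam) (hlamL : lam < 1 / L)
    (w : ℕ → EuclideanSpace ℝ (Fin n))
    (hw0 : w 0 ∈ spSet n s)
    (hiter : ∀ k, w (k + 1) ∈ projSet (spSet n s) (w k - lam • f' (w k)))
    (wstar : EuclideanSpace ℝ (Fin n))
    (hconvg : Tendsto w atTop (𝓝 wstar)) :
    Tendsto (fun k : ℕ => (k : ℝ) * (f (w k) - f wstar)) atTop (𝓝 0) := by
  have hlamL' : lam * L < 1 := by
    rw [lt_div_iff₀ hL] at hlamL; exact hlamL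
  -- all iterates are feasible
  have hmem : ∀ k, w k ∈ spSet n s := by
    intro k
    cases k with
    | zero => exact hw0
    | succ k => exact (hiter k).1
  -- sufficient decrease: f (w (k+1)) ≤ f (w k)
  have hdec : ∀ k, f (w (k + 1)) ≤ f (w k) := by
    intro k
    set g := f' (w k) with hg
    set z := w k - lam • g with hz
    have h := (hiter k).2 (w k) (hmem k)
    have hsq : ‖z - w (k + 1)‖ ^ 2 ≤ ‖z - w k‖ ^ 2 :=
      pow_le_pow_left₀ (norm_nonneg _) h 2
    have h1 : z - w (k + 1) = (w k - w (k + 1)) - lam • g := by rw [hz]; abel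
    have h2 : z - w k = -(lam • g) := by rw [hz]; abel
    rw [h1, h2, norm_neg, norm_sub_sq_real] at hsq
    have h3 : (inner ℝ (w k - w (k + 1)) (lam • g) : ℝ)
        = -(lam * (inner ℝ g (w (k + 1) - w k) : ℝ)) := by
      rw [real_inner_smul_right,
        show w k - w (k + 1) = -(w (k + 1) - w k) from by abel, inner_neg_left,
        real_inner_comm]
      ring
    rw [h3] at hsq
    -- hsq : ‖w k - w (k+1)‖^2 + 2*lam*inner ℝ g (w (k+1) - w k) ≤ 0 (after rearranging)
    have hdesc := grad_descent_ineq f f' L hgrad hlip (w k) (w (k + 1))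
    have hnn : (0:ℝ) ≤ ‖w (k + 1) - w k‖ ^ 2 := by positivity
    have hnorm : ‖w k - w (k + 1)‖ = ‖w (k + 1) - w k‖ := norm_sub_rev _ _
    rw [hnorm] at hsq
    nlinarith [hsq, hdesc, hnn, mul_nonneg (le_of_lt hlam0) hnn]
  have hanti : Antitone fun k => f (w k) := antitone_nat_of_succ_le hdec
  -- f (w k) → f wstar
  have hfc : ContinuousAt f wstar := (hgrad wstar).differentiableAt.continuousAt
  have htend : Tendsto (fun k => f (w k)) atTop (𝓝 (f wstar)) := hfc.tendsto.comp hconvg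
  have hge : ∀ k, f wstar ≤ f (w k) := by
    intro k
    refine le_of_tendsto htend (eventually_atTop.2 ⟨k, fun m hm => ?_⟩)
    exact hanti hm
  -- coordinatewise convergence and support stabilization
  have hcoord : ∀ i, Tendsto (fun k => w k i) atTop (𝓝 (wstar i)) := by
    intro i
    exact ((EuclideanSpace.proj (𝕜 := ℝ) i).continuous.tendsto wstar).comp hconvg
  have hsupp : ∀ᶠ k in atTop, ∀ i, wstar i ≠ 0 → w k i ≠ 0 := by
    rw [eventually_all]
    intro i
    rcases eq_or_ne (wstar i) 0 with h | h
    · filter_upwards with k hk; exact absurd h hk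
    · filter_upwards [(hcoord i).eventually_ne h] with k hk _; exact hk
  obtain ⟨K, hK⟩ := eventually_atTop.1 hsupp
  -- obtuse angle inequality for large k
  have hobt : ∀ k, (∀ i, wstar i ≠ 0 → w (k + 1) i ≠ 0) →
      (inner ℝ ((w k - lam • f' (w k)) - w (k + 1)) (wstar - w (k + 1)) : ℝ) ≤ 0 := by
    intro k hks
    set z := w k - lam • f' (w k) with hz
    set y := w (k + 1) with hy
    set v := wstar - y with hv
    have hmt : ∀ t : ℝ, y + t • v ∈ spSet n s := by
      intro t
      have hy' := (hiter k).1
      refine le_trans (Finset.card_le_card ?_) hy'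
      intro i hi
      simp only [Finset.mem_filter, Finset.mem_univ, true_and] at hi ⊢
      intro hyi
      apply hi
      have hws : wstar i = 0 := by
        by_contra hcon
        exact (hks i hcon) hyi
      show (y + t • v) i = 0
      have hyi' : y i = 0 := hyi
      simp [hv, hy, PiLp.add_apply, PiLp.smul_apply, PiLp.sub_apply, hyi, hyi', hws]
    have h2 : ∀ t : ℝ, 0 < t → (inner ℝ (z - y) v : ℝ) ≤ t / 2 * ‖v‖ ^ 2 := by
      intro t ht
      have h := (hiter k).2 (y + t • v) (hmt t)
      have hsq : ‖z - y‖ ^ 2 ≤ ‖z - (y + t • v)‖ ^ 2 :=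
        pow_le_pow_left₀ (norm_nonneg _) h 2
      have he : z - (y + t • v) = (z - y) - t • v := by abel
      have heq : ‖z - (y + t • v)‖ ^ 2
          = ‖z - y‖ ^ 2 - 2 * (t * (inner ℝ (z - y) v : ℝ)) + t ^ 2 * ‖v‖ ^ 2 := by
        rw [he, norm_sub_sq_real, real_inner_smul_right, norm_smul, Real.norm_eq_abs,
          abs_of_pos ht, mul_pow]
      rw [heq] at hsq
      nlinarith [hsq, ht]
    have hlim : Tendsto (fun t : ℝ => t / 2 * ‖v‖ ^ 2) (𝓝[>] 0) (𝓝 0) := by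
      have hc : Continuous fun t : ℝ => t / 2 * ‖v‖ ^ 2 := by fun_prop
      have : Tendsto (fun t : ℝ => t / 2 * ‖v‖ ^ 2) (𝓝 0) (𝓝 (0 / 2 * ‖v‖ ^ 2)) :=
        hc.tendsto 0
      simpa using this.mono_left nhdsWithin_le_nhds
    refine ge_of_tendsto hlim ?_
    filter_upwards [self_mem_nhdsWithin] with t ht
    exact h2 t ht
  -- key telescoping inequality
  have hkey : ∀ k, K ≤ k + 1 → 2 * lam * (f (w (k + 1)) - f wstar)
      ≤ ‖w k - wstar‖ ^ 2 - ‖w (k + 1) - wstar‖ ^ 2 := by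
    intro k hk
    have hob := hobt k (hK (k + 1) hk)
    have hD : lam * (inner ℝ (f' (w k)) (w (k + 1) - wstar) : ℝ)
        ≤ (inner ℝ (w k - w (k + 1)) (w (k + 1) - wstar) : ℝ) := by
      have he : (w k - lam • f' (w k)) - w (k + 1) = (w k - w (k + 1)) - lam • f' (w k) := by
        abel
      rw [he, inner_sub_left, real_inner_smul_left] at hob
      rw [show wstar - w (k + 1) = -(w (k + 1) - wstar) from by abel, inner_neg_right,
        inner_neg_right] at hob
      linarith
    have hE := my_three_point (w k) (w (k + 1)) wstar
    have hdesc := grad_descent_ineq f f' L hgrad hlip (w k) (w (k + 1))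
    have hcvx := grad_convex_ineq f f' hconv hgrad (w k) wstar
    have hC : (inner ℝ (f' (w k)) (w (k + 1) - w k) : ℝ)
        = (inner ℝ (f' (w k)) (w (k + 1) - wstar) : ℝ)
          + (inner ℝ (f' (w k)) (wstar - w k) : ℝ) := by
      rw [← inner_add_right, sub_add_sub_cancel]
    have hd2 : (0:ℝ) ≤ ‖w k - w (k + 1)‖ ^ 2 := by positivity
    have hnorm : ‖w (k + 1) - w k‖ = ‖w k - w (k + 1)‖ := norm_sub_rev _ _
    rw [hnorm] at hdesc
    have h6 : f (w (k + 1)) - f wstar ≤ (inner ℝ (f' (w k)) (w (k + 1) - wstar) : ℝ)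
        + L / 2 * ‖w k - w (k + 1)‖ ^ 2 := by
      linarith [hdesc, hcvx, hC.le, hC.ge]
    have h7 := mul_le_mul_of_nonneg_left h6 (le_of_lt hlam0)
    have h8 : (0:ℝ) ≤ (1 - lam * L) * ‖w k - w (k + 1)‖ ^ 2 :=
      mul_nonneg (by linarith) hd2
    nlinarith [h7, hD, hE, h8, hd2]
  -- nonnegativity of the gap and antitonicity
  have hanonneg : ∀ k, 0 ≤ f (w k) - f wstar := fun k => by linarith [hge k]
  have haanti : ∀ k m : ℕ, k ≤ m → f (w m) - f wstar ≤ f (w k) - f wstar := fun k m h => by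
    linarith [hanti h]
  -- chain inequality
  have hchain : ∀ k0, K ≤ k0 → ∀ m : ℕ,
      2 * lam * ((m + 1 : ℝ) * (f (w (k0 + m + 1)) - f wstar))
        ≤ ‖w k0 - wstar‖ ^ 2 - ‖w (k0 + m + 1) - wstar‖ ^ 2 := by
    intro k0 hk0 m
    induction m with
    | zero =>
      have := hkey k0 (le_trans hk0 (Nat.le_succ k0))
      simpa using this
    | succ m ih =>
      have h1 := hkey (k0 + m + 1) (by omega)
      have h2 : f (w (k0 + m + 1 + 1)) - f wstar ≤ f (w (k0 + m + 1)) - f wstar :=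
        haanti _ _ (Nat.le_succ _)
      have h3 : (0:ℝ) ≤ 2 * lam * (m + 1 : ℝ) := by positivity
      have h4 : 2 * lam * ((m + 1 : ℝ) * (f (w (k0 + m + 1 + 1)) - f wstar))
          ≤ 2 * lam * ((m + 1 : ℝ) * (f (w (k0 + m + 1)) - f wstar)) := by
        nlinarith [mul_le_mul_of_nonneg_left h2 h3]
      have heq : k0 + (m + 1) + 1 = k0 + m + 1 + 1 := by omega
      rw [heq]
      push_cast
      push_cast at ih h1 h4
      nlinarith [ih, h1, h4]
  -- the squared distances tend to 0
  have hbto : Tendsto (fun k => ‖w k - wstar‖ ^ 2) atTop (𝓝 0) := by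
    have h1 : Tendsto (fun k => w k - wstar) atTop (𝓝 (wstar - wstar)) :=
      hconvg.sub tendsto_const_nhds
    rw [sub_self] at h1
    have h2 := (h1.norm).pow 2
    simpa using h2
  -- conclude
  rw [Metric.tendsto_atTop]
  intro ε hε
  have hposε : (0:ℝ) < lam * ε := by positivity
  obtain ⟨K1, hK1⟩ := eventually_atTop.1 (hbto.eventually (gt_mem_nhds hposε))
  refine ⟨2 * max K K1 + 2, fun N hN => ?_⟩
  obtain ⟨m, hNm⟩ : ∃ m : ℕ, N = max K K1 + m + 1 := ⟨N - max K K1 - 1, by omega⟩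
  have hch := hchain (max K K1) (le_max_left _ _) m
  rw [← hNm] at hch
  have hbK' : ‖w (max K K1) - wstar‖ ^ 2 < lam * ε :=
    hK1 (max K K1) (by omega)
  have hbN : (0:ℝ) ≤ ‖w N - wstar‖ ^ 2 := by positivity
  have hfrac : ((m:ℝ) + 1) * (f (w N) - f wstar) < ε / 2 := by
    nlinarith [hch, hbK', hbN, hlam0, hε]
  have haN : (0:ℝ) ≤ f (w N) - f wstar := hanonneg N
  have hmN : N ≤ 2 * (m + 1) := by omega
  have hcast : (N : ℝ) ≤ 2 * ((m:ℝ) + 1) := by exact_mod_cast hmN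
  have hfin : (N : ℝ) * (f (w N) - f wstar) < ε := by
    calc (N : ℝ) * (f (w N) - f wstar)
        ≤ 2 * ((m:ℝ) + 1) * (f (w N) - f wstar) := mul_le_mul_of_nonneg_right hcast haN
      _ = 2 * (((m:ℝ) + 1) * (f (w N) - f wstar)) := by ring
      _ < ε := by linarith
  rw [Real.dist_eq, sub_zero, abs_of_nonneg (mul_nonneg (Nat.cast_nonneg N) haN)]
  exact hfin
end
end

section
/- Let {D_m}_{m≥0} be a nonincreasing sequence of nonnegative reals with D_m → 0, let θ ∈ (1/2, 1), and let a, C > 0 be such that a·D_m^{2θ} ≤ C·(D_{m−1} − D_m) for all m ≥ 1. Then D_m = O(m^{−1/(2θ−1)}): there exist K > 0 and M ∈ ℕ such that D_m ≤ K·m^{−1/(2θ−1)} for all m ≥ M. -/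
open Filter Topology

open Real in
private lemma stmt14_convex_aux {x y ν : ℝ} (hy : 0 < y) (hxy : y ≤ x) (hν0 : 0 < ν)
    (hν1 : ν < 1) :
    ν * x ^ (-ν - 1) * (x - y) ≤ y ^ (-ν) - x ^ (-ν) := by
  have hx : 0 < x := lt_of_lt_of_le hy hxy
  set w : ℝ := ν * (x - y) / x with hw
  have hw0 : 0 ≤ w := div_nonneg (mul_nonneg hν0.le (sub_nonneg.mpr hxy)) hx.le
  have hber : (1 + (y / x - 1)) ^ ν ≤ 1 + ν * (y / x - 1) := by
    apply rpow_one_add_le_one_add_mul_self _ hν0.le hν1.le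
    nlinarith [div_pos hy hx]
  have h1 : (y / x) ^ ν ≤ 1 - w := by
    have e1 : 1 + (y / x - 1) = y / x := by ring
    have e2 : 1 + ν * (y / x - 1) = 1 - w := by rw [hw]; field_simp; ring
    rw [e1, e2] at hber; exact hber
  have hA : 0 < y ^ ν := rpow_pos_of_pos hy ν
  have hB : 0 < x ^ ν := rpow_pos_of_pos hx ν
  have h2 : y ^ ν ≤ (1 - w) * x ^ ν := by
    rw [div_rpow hy.le hx.le, div_le_iff₀ hB] at h1
    linarith
  have h3 : (1 + w) * y ^ ν ≤ 1 * x ^ ν := by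
    have h2' := mul_le_mul_of_nonneg_left h2 (show (0:ℝ) ≤ 1 + w by linarith)
    nlinarith [mul_nonneg (mul_nonneg hw0 hw0) hB.le]
  have key : (1 + w) * (x ^ ν)⁻¹ ≤ (y ^ ν)⁻¹ := by
    have := (div_le_div_iff₀ hB hA).mpr h3
    simpa [div_eq_mul_inv] using this
  have hyn : y ^ (-ν) = (y ^ ν)⁻¹ := rpow_neg hy.le ν
  have hxn : x ^ (-ν) = (x ^ ν)⁻¹ := rpow_neg hx.le ν
  have hxs : x ^ (-ν - 1) = (x ^ ν)⁻¹ * x⁻¹ := by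
    rw [show (-ν - 1 : ℝ) = -ν + (-1) by ring, rpow_add hx, rpow_neg_one, rpow_neg hx.le]
  rw [hyn, hxn, hxs]
  have e3 : ν * ((x ^ ν)⁻¹ * x⁻¹) * (x - y) = w * (x ^ ν)⁻¹ := by
    rw [hw, div_eq_mul_inv]; ring
  linarith [e3.le, e3.ge, key]

/-- sublinear rate `O(m^{-1/(2θ-1)})` for the KL recursion with exponent
`θ ∈ (1/2, 1)`. -/
theorem stmt14 (D : ℕ → ℝ) (hD : ∀ m, 0 ≤ D m) (hanti : Antitone D)
    (hlim : Tendsto D atTop (𝓝 0))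
    (θ a C : ℝ) (hθ1 : 1 / 2 < θ) (hθ2 : θ < 1) (ha : 0 < a) (hC : 0 < C)
    (hrec : ∀ m : ℕ, a * D (m + 1) ^ (2 * θ) ≤ C * (D m - D (m + 1))) :
    ∃ K > 0, ∃ M : ℕ, ∀ m ≥ M, D m ≤ K * (m : ℝ) ^ (-(1 / (2 * θ - 1))) := by
  set ν : ℝ := 2 * θ - 1 with hν
  have hν0 : 0 < ν := by rw [hν]; linarith
  have hν1 : ν < 1 := by rw [hν]; linarith
  have h2θ : 2 * θ = 1 + ν := by rw [hν]; ring
  clear_value ν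
  by_cases hzero : ∃ M : ℕ, D M = 0
  · obtain ⟨M, hM⟩ := hzero
    refine ⟨1, one_pos, M, fun m hm => ?_⟩
    have hDm : D m = 0 := le_antisymm (hM ▸ hanti hm) (hD m)
    rw [hDm]
    positivity
  · push_neg at hzero
    have hpos : ∀ m, 0 < D m := fun m => lt_of_le_of_ne (hD m) (Ne.symm (hzero m))
    set c : ℝ := min (ν * a / (2 * C)) ((2 ^ (ν / (1 + ν)) - 1) * D 0 ^ (-ν)) with hcdef
    have h2gt : (1 : ℝ) < 2 ^ (ν / (1 + ν)) := by
      have : (2 : ℝ) ^ (0 : ℝ) < 2 ^ (ν / (1 + ν)) := by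
        apply Real.rpow_lt_rpow_left_iff (by norm_num : (1:ℝ) < 2) |>.mpr
        positivity
      simpa using this
    have hc : 0 < c := by
      apply lt_min
      · positivity
      · have := Real.rpow_pos_of_pos (hpos 0) (-ν)
        nlinarith
    -- the key one-step estimate
    have hstep : ∀ m : ℕ, D m ^ (-ν) + c ≤ D (m + 1) ^ (-ν) := by
      intro m
      set x := D m with hx
      set y := D (m + 1) with hy
      have hxpos : 0 < x := hpos m
      have hypos : 0 < y := hpos (m + 1)
      have hxy : y ≤ x := hanti (Nat.le_succ m)
      have hrec' : a * y ^ (1 + ν) ≤ C * (x - y) := by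
        have := hrec m; rwa [h2θ] at this
      by_cases hcase : (1 / 2 : ℝ) * x ^ (1 + ν) ≤ y ^ (1 + ν)
      · -- case 1
        have hgap : a / (2 * C) * x ^ (1 + ν) ≤ x - y := by
          rw [div_mul_eq_mul_div, div_le_iff₀ (by positivity)]
          nlinarith
        have hconv := stmt14_convex_aux hypos hxy hν0 hν1
        have hprod : x ^ (-ν - 1) * x ^ (1 + ν) = 1 := by
          rw [← Real.rpow_add hxpos, show (-ν - 1 + (1 + ν) : ℝ) = 0 by ring, Real.rpow_zero]
        have hlow : ν * (a / (2 * C)) ≤ ν * x ^ (-ν - 1) * (x - y) := by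
          have hxp : 0 < x ^ (-ν - 1) := Real.rpow_pos_of_pos hxpos _
          calc ν * (a / (2 * C)) = ν * (a / (2 * C)) * (x ^ (-ν - 1) * x ^ (1 + ν)) := by
                rw [hprod, mul_one]
              _ = ν * x ^ (-ν - 1) * (a / (2 * C) * x ^ (1 + ν)) := by ring
              _ ≤ ν * x ^ (-ν - 1) * (x - y) := by
                apply mul_le_mul_of_nonneg_left hgap (by positivity)
        have hcle : c ≤ ν * (a / (2 * C)) := by
          have := min_le_left (ν * a / (2 * C)) ((2 ^ (ν / (1 + ν)) - 1) * D 0 ^ (-ν))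
          rw [← hcdef] at this
          linarith [this, (by ring : ν * a / (2 * C) = ν * (a / (2 * C)))]
        linarith
      · -- case 2
        push_neg at hcase
        have he : ((1 / 2 : ℝ) * x ^ (1 + ν)) ^ (-(ν / (1 + ν)))
            ≤ (y ^ (1 + ν)) ^ (-(ν / (1 + ν))) := by
          apply Real.rpow_le_rpow_of_nonpos (by positivity) hcase.le
          have : 0 ≤ ν / (1 + ν) := by positivity
          linarith
        have hne : (1 + ν) ≠ 0 := by positivity
        have hee : (1 + ν) * (-(ν / (1 + ν))) = -ν := by field_simp
        have eY : (y ^ (1 + ν)) ^ (-(ν / (1 + ν))) = y ^ (-ν) := by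
          rw [← Real.rpow_mul hypos.le, hee]
        have eX : (x ^ (1 + ν)) ^ (-(ν / (1 + ν))) = x ^ (-ν) := by
          rw [← Real.rpow_mul hxpos.le, hee]
        have eH : ((1 / 2 : ℝ)) ^ (-(ν / (1 + ν))) = 2 ^ (ν / (1 + ν)) := by
          rw [one_div, ← Real.rpow_neg_one (2:ℝ), ← Real.rpow_mul (by norm_num : (0:ℝ) ≤ 2)]
          congr 1
          ring
        have eC : ((1 / 2 : ℝ) * x ^ (1 + ν)) ^ (-(ν / (1 + ν)))
            = 2 ^ (ν / (1 + ν)) * x ^ (-ν) := by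
          rw [Real.mul_rpow (by norm_num) (Real.rpow_pos_of_pos hxpos _).le, eH, eX]
        rw [eY, eC] at he
        have hxD0 : D 0 ^ (-ν) ≤ x ^ (-ν) :=
          Real.rpow_le_rpow_of_nonpos hxpos (hanti (Nat.zero_le m))
            (neg_nonpos.mpr hν0.le)
        have hcle : c ≤ (2 ^ (ν / (1 + ν)) - 1) * D 0 ^ (-ν) := min_le_right _ _
        nlinarith [mul_le_mul_of_nonneg_left hxD0 (by linarith : (0:ℝ) ≤ 2 ^ (ν / (1 + ν)) - 1)]
    -- summing the one-step estimates
    have hind : ∀ m : ℕ, D 0 ^ (-ν) + c * m ≤ D m ^ (-ν) := by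
      intro m
      induction m with
      | zero => simp
      | succ n ih =>
        have := hstep n
        push_cast
        push_cast at ih
        linarith
    refine ⟨c ^ (-(1 / ν)), Real.rpow_pos_of_pos hc _, 1, fun m hm => ?_⟩
    have hm1 : (1 : ℝ) ≤ (m : ℝ) := by exact_mod_cast hm
    have hcm : 0 < c * (m : ℝ) := by nlinarith
    have hle : c * (m : ℝ) ≤ D m ^ (-ν) := by
      have h0 := Real.rpow_pos_of_pos (hpos 0) (-ν)
      linarith [hind m]
    have hmain := Real.rpow_le_rpow_of_nonpos hcm hle
      (neg_nonpos.mpr (by positivity : (0:ℝ) ≤ 1 / ν))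
    have eL : (D m ^ (-ν)) ^ (-(1 / ν)) = D m := by
      rw [← Real.rpow_mul (hD m),
        show (-ν) * (-(1 / ν)) = 1 by rw [neg_mul_neg, mul_one_div, div_self hν0.ne'],
        Real.rpow_one]
    have eR : (c * (m : ℝ)) ^ (-(1 / ν)) = c ^ (-(1 / ν)) * (m : ℝ) ^ (-(1 / ν)) :=
      Real.mul_rpow hc.le (Nat.cast_nonneg m)
    rw [eL, eR] at hmain
    exact hmain
end

section
/- Let {D_m}_{m≥0} be a nonincreasing sequence of nonnegative reals with D_m → 0, let θ ∈ (0, 1/2], and let a, C > 0 be such that a·D_m^{2θ} ≤ C·(D_{m−1} − D_m) for all m ≥ 1. Then {D_m} converges Q-linearly to 0 eventually: there exist ρ ∈ (0,1) and M ∈ ℕ such that D_m ≤ ρ·D_{m−1} for all m ≥ M; in particular D_m = O(ρ^m). -/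
open Filter Topology

/-- eventual Q-linear convergence to 0 for the KL recursion with exponent
`θ ∈ (0, 1/2]`, and in particular `D_m = O(ρ^m)`. -/
theorem stmt15 (D : ℕ → ℝ) (hD : ∀ m, 0 ≤ D m) (hanti : Antitone D)
    (hlim : Tendsto D atTop (𝓝 0))
    (θ a C : ℝ) (hθ1 : 0 < θ) (hθ2 : θ ≤ 1 / 2) (ha : 0 < a) (hC : 0 < C)
    (hrec : ∀ m : ℕ, a * D (m + 1) ^ (2 * θ) ≤ C * (D m - D (m + 1))) :
    ∃ ρ : ℝ, 0 < ρ ∧ ρ < 1 ∧ (∃ M : ℕ, ∀ m ≥ M, D (m + 1) ≤ ρ * D m) ∧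
      ∃ K > 0, ∀ m, D m ≤ K * ρ ^ m := by
  set ρ : ℝ := C / (a + C) with hρdef
  have haC : 0 < a + C := by linarith
  have hρ0 : 0 < ρ := div_pos hC haC
  have hρ1 : ρ < 1 := (div_lt_one haC).2 (by linarith)
  -- eventually D m ≤ 1
  obtain ⟨M, hM⟩ := (hlim.eventually (gt_mem_nhds one_pos)).exists_forall_of_atTop
  have hkey : ∀ m ≥ M, D (m + 1) ≤ ρ * D m := by
    intro m hm
    have h1 : D (m + 1) ≤ 1 := le_of_lt (hM (m + 1) (le_trans hm (Nat.le_succ m)))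
    have hself : D (m + 1) ≤ D (m + 1) ^ (2 * θ) := by
      rcases eq_or_lt_of_le (hD (m + 1)) with h | h
      · rw [← h, Real.zero_rpow (by linarith : (2 : ℝ) * θ ≠ 0)]
      · calc D (m + 1) = D (m + 1) ^ (1 : ℝ) := (Real.rpow_one _).symm
          _ ≤ D (m + 1) ^ (2 * θ) :=
            Real.rpow_le_rpow_of_exponent_ge h h1 (by linarith)
    have h2 : a * D (m + 1) ≤ C * (D m - D (m + 1)) :=
      le_trans (by nlinarith) (hrec m)
    rw [hρdef, div_mul_eq_mul_div, le_div_iff₀ haC]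
    nlinarith
  refine ⟨ρ, hρ0, hρ1, ⟨M, hkey⟩, (D 0 + 1) / ρ ^ M,
    div_pos (by linarith [hD 0]) (by positivity), ?_⟩
  intro m
  rcases le_or_gt m M with h | h
  · have : ρ ^ M ≤ ρ ^ m := pow_le_pow_of_le_one (le_of_lt hρ0) (le_of_lt hρ1) h
    have hD0 : D m ≤ D 0 := hanti (Nat.zero_le m)
    rw [div_mul_eq_mul_div, le_div_iff₀ (by positivity)]
    nlinarith [pow_pos hρ0 m, pow_pos hρ0 M, hD 0, hD m,
      mul_le_mul_of_nonneg_left this (hD m),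
      mul_le_mul_of_nonneg_right hD0 (le_of_lt (pow_pos hρ0 m))]
  · -- m > M : induction D m ≤ ρ^(m-M) * D M
    have hind : ∀ k, D (M + k) ≤ ρ ^ k * D M := by
      intro k
      induction k with
      | zero => simp
      | succ n ih =>
        have := hkey (M + n) (Nat.le_add_right M n)
        calc D (M + (n + 1)) = D ((M + n) + 1) := by ring_nf
          _ ≤ ρ * D (M + n) := this
          _ ≤ ρ * (ρ ^ n * D M) := by nlinarith
          _ = ρ ^ (n + 1) * D M := by ring
    have := hind (m - M)
    rw [Nat.add_sub_cancel' (le_of_lt h)] at this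
    have hpow : ρ ^ (m - M) = ρ ^ m / ρ ^ M := by
      rw [eq_div_iff (by positivity), ← pow_add, Nat.sub_add_cancel (le_of_lt h)]
    rw [hpow] at this
    have hDM : D M ≤ D 0 := hanti (Nat.zero_le M)
    calc D m ≤ ρ ^ m / ρ ^ M * D M := this
      _ ≤ (D 0 + 1) / ρ ^ M * ρ ^ m := by
        rw [div_mul_eq_mul_div, div_mul_eq_mul_div, div_le_div_iff₀ (by positivity) (by positivity)]
        nlinarith [mul_pos (pow_pos hρ0 m) (pow_pos hρ0 M),
          mul_le_mul_of_nonneg_left (show D M ≤ D 0 + 1 by linarith)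
            (le_of_lt (mul_pos (pow_pos hρ0 m) (pow_pos hρ0 M)))]
end
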